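/- arXiv:1806.08944 — 6 statements merged into one kernel-verified Lean document; each statement's English description precedes it below -/
import Mathlib

section
/- For an odd prime q, the energy of the line graph of the zero-divisor graph of Z_{2q} equals 2q - 4, i.e., the sum of absolute values of the eigenvalues of the adjacency matrix of L(Γ(Z_{2q})) is 2q - 4. -/
open Polynomial SimpleGraph

/-- The zero-divisor graph of `ZMod n`: vertices are the nonzero zero-divisors,
adjacency is `x * y = 0` (for distinct vertices). -/
def zdGraph (n : ℕ) :
    SimpleGraph {x : ZMod n // x ≠ 0 ∧ ∃ y : ZMod n, y ≠ 0 ∧ x * y = 0} where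
  Adj a b := a ≠ b ∧ (a : ZMod n) * b = 0
  symm := ⟨fun a b h => ⟨h.1.symm, by rw [mul_comm]; exact h.2⟩⟩
  loopless := ⟨fun a h => h.1 rfl⟩

/-- The energy of a graph: the sum of the absolute values of the eigenvalues
(roots of the characteristic polynomial, with multiplicity) of its adjacency matrix. -/
noncomputable def energy {V : Type*} [Fintype V] [DecidableEq V] (G : SimpleGraph V)
    [DecidableRel G.Adj] : ℝ :=
  (((G.adjMatrix ℝ).charpoly).roots.map (fun x => |x|)).sum

/-- The Wiener index of a graph: half the sum of distances over all ordered pairs. -/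
noncomputable def wienerIndex {V : Type*} (G : SimpleGraph V) : ℕ :=
  (∑ᶠ p : V × V, G.dist p.1 p.2) / 2

section Aux

variable {W : Type*} [Fintype W] [DecidableEq W]

open Matrix in
private lemma det_aux' {F : Type*} [Field F] (t : F) (ht : t ≠ 0) (m : ℕ)
    (hm : Fintype.card W = m + 1) :
    (t • (1 : Matrix W W F) - Matrix.of fun _ _ => 1).det
      = t ^ m * (t - (m + 1)) := by
  have h1 : (t • (1 : Matrix W W F) - Matrix.of fun _ _ => 1)
      = t • ((1 : Matrix W W F)
          + Matrix.replicateCol Unit (fun _ : W => -t⁻¹) * Matrix.replicateRow Unit (fun _ : W => (1:F))) := by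
    ext i j
    by_cases h : i = j <;>
      simp [h, Matrix.mul_apply, Matrix.one_apply, Matrix.replicateCol_apply, Matrix.replicateRow_apply,
        mul_add, mul_inv_cancel₀ ht, sub_eq_add_neg]
  rw [h1, Matrix.det_smul, Matrix.det_one_add_replicateCol_mul_replicateRow, hm]
  have h2 : ((fun _ : W => (1:F)) ⬝ᵥ fun _ : W => -t⁻¹) = -((m+1) * t⁻¹) := by
    simp [dotProduct, hm]
  rw [h2]
  field_simp
  ring

private lemma charpoly_K' (m : ℕ) (hm : Fintype.card W = m + 1) :
    (Matrix.of fun i j : W => if i = j then (0:ℝ) else 1).charpoly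
      = (X + 1) ^ m * (X - C (m : ℝ)) := by
  set A : Matrix W W ℝ := Matrix.of fun i j : W => if i = j then (0:ℝ) else 1 with hA
  let F := FractionRing ℝ[X]
  have hinj : Function.Injective (algebraMap ℝ[X] F) := IsFractionRing.injective _ _
  apply hinj
  have hmap : A.charpoly = (Matrix.charmatrix A).det := rfl
  rw [hmap, RingHom.map_det, RingHom.mapMatrix_apply]
  have hchar : (Matrix.charmatrix A).map (algebraMap ℝ[X] F)
      = (algebraMap ℝ[X] F (X + 1)) • (1 : Matrix W W F) - Matrix.of fun _ _ => 1 := by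
    ext i j
    by_cases h : i = j
    · subst h
      simp [Matrix.charmatrix_apply_eq, hA, Matrix.one_apply, map_add, _root_.map_one]
    · simp [Matrix.charmatrix_apply_ne _ _ _ h, hA, h, Matrix.one_apply]
  rw [hchar, det_aux' _ ?_ m hm]
  · push_cast [_root_.map_mul, map_pow, map_add, map_sub, _root_.map_one, map_natCast]
    ring
  · intro h
    have h1 : (X + 1 : ℝ[X]) = 0 := hinj (by simpa using h)
    have h2 := congrArg (Polynomial.eval 0) h1
    simp at h2

private lemma roots_sum' (m : ℕ) :
    ((((X:ℝ[X]) + 1) ^ m * (X - C (m : ℝ))).roots.map (fun x => |x|)).sum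
      = 2 * (m:ℝ) := by
  have hx1 : ((X:ℝ[X]) + 1) = X - C (-1) := by simp [sub_neg_eq_add]
  rw [hx1, roots_mul (by
      apply mul_ne_zero (pow_ne_zero _ (X_sub_C_ne_zero _)) (X_sub_C_ne_zero _)),
    roots_pow, roots_X_sub_C, roots_X_sub_C]
  simp [Multiset.map_nsmul, Multiset.sum_nsmul, abs_of_nonneg (by positivity : (0:ℝ) ≤ m)]
  ring

end Aux

section ZD

variable {q : ℕ} [NeZero (2*q)]

private lemma zd_mul_eq_zero_iff (x y : ZMod (2*q)) :
    x * y = 0 ↔ 2*q ∣ x.val * y.val := by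
  conv_lhs => rw [← ZMod.natCast_zmod_val x, ← ZMod.natCast_zmod_val y]
  rw [← Nat.cast_mul, ZMod.natCast_eq_zero_iff]

private lemma zd_eq_q_of (hq : q.Prime) (x : ZMod (2*q)) (hx0 : x ≠ 0) (h : q ∣ x.val) :
    x = (q : ZMod (2*q)) := by
  have hlt := x.val_lt
  have hv0 : x.val ≠ 0 := fun h' => hx0 ((ZMod.val_eq_zero x).1 h')
  obtain ⟨k, hk⟩ := h
  have hq1 : 1 ≤ q := hq.one_lt.le
  have hk0 : k ≠ 0 := by
    rintro rfl
    rw [mul_zero] at hk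
    omega
  have hk2 : k < 2 := by
    by_contra hge
    push_neg at hge
    have h2q : q * 2 ≤ q * k := Nat.mul_le_mul_left q hge
    omega
  have hk1 : k = 1 := by omega
  rw [← ZMod.natCast_zmod_val x, hk, hk1, mul_one]

private lemma zd_not_two_dvd (hodd : Odd q) : ¬ (2 ∣ q) := by
  obtain ⟨k, hk⟩ := hodd
  omega

private lemma zd_two_dvd_val (hq : q.Prime) (hodd : Odd q) (x : ZMod (2*q))
    (hx0 : x ≠ 0) (hxq : x ≠ (q : ZMod (2*q)))
    (hy : ∃ y : ZMod (2*q), y ≠ 0 ∧ x * y = 0) : 2 ∣ x.val := by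
  obtain ⟨y, hy0, hxy⟩ := hy
  rw [zd_mul_eq_zero_iff] at hxy
  by_contra hnd
  have h2 : 2 ∣ x.val * y.val := dvd_trans ⟨q, rfl⟩ hxy
  have h2y : 2 ∣ y.val := ((Nat.Prime.dvd_mul Nat.prime_two).1 h2).resolve_left hnd
  have hqd : q ∣ x.val * y.val := dvd_trans ⟨2, mul_comm 2 q⟩ hxy
  rcases (hq.dvd_mul).1 hqd with h | h
  · exact hxq (zd_eq_q_of hq x hx0 h)
  · have hco : Nat.Coprime 2 q := (Nat.prime_two.coprime_iff_not_dvd).2 (zd_not_two_dvd hodd)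
    have hdy : 2*q ∣ y.val := Nat.Coprime.mul_dvd_of_dvd_of_dvd hco h2y h
    have := Nat.eq_zero_of_dvd_of_lt hdy y.val_lt
    exact hy0 ((ZMod.val_eq_zero y).1 this)

private lemma zd_q_val (hq : q.Prime) : ((q : ZMod (2*q))).val = q :=
  ZMod.val_cast_of_lt (by have := hq.one_lt; omega)

private lemma zd_center_mem (hq : q.Prime) :
    (q : ZMod (2*q)) ≠ 0 ∧ ∃ y : ZMod (2*q), y ≠ 0 ∧ (q : ZMod (2*q)) * y = 0 := by
  have hq1 := hq.one_lt
  refine ⟨?_, ((2:ℕ) : ZMod (2*q)), ?_, ?_⟩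
  · intro h
    have := zd_q_val hq
    rw [h, ZMod.val_zero] at this
    omega
  · intro h
    have h2 : ((2:ℕ) : ZMod (2*q)).val = 2 := ZMod.val_cast_of_lt (by omega)
    rw [h, ZMod.val_zero] at h2
    omega
  · rw [show ((2:ℕ) : ZMod (2*q)) = ((2:ℕ) : ZMod (2*q)) from rfl, ← Nat.cast_mul,
      mul_comm q 2, ZMod.natCast_self]

variable (q) in
/-- The center vertex of the zero-divisor graph of `ZMod (2*q)`. -/
private def zdCenter (hq : q.Prime) :
    {x : ZMod (2*q) // x ≠ 0 ∧ ∃ y : ZMod (2*q), y ≠ 0 ∧ x * y = 0} :=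
  ⟨(q : ZMod (2*q)), zd_center_mem hq⟩

private lemma zd_adj_center (hq : q.Prime) (hodd : Odd q)
    (x : {x : ZMod (2*q) // x ≠ 0 ∧ ∃ y : ZMod (2*q), y ≠ 0 ∧ x * y = 0})
    (hx : x ≠ zdCenter q hq) : (zdGraph (2*q)).Adj x (zdCenter q hq) := by
  have hxq : (x : ZMod (2*q)) ≠ (q : ZMod (2*q)) := fun h => hx (Subtype.ext h)
  obtain ⟨k, hk⟩ := zd_two_dvd_val hq hodd x.1 x.2.1 hxq x.2.2
  refine ⟨hx, ?_⟩
  show (x : ZMod (2*q)) * (q : ZMod (2*q)) = 0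
  conv_lhs => rw [← ZMod.natCast_zmod_val x.1, ← Nat.cast_mul]
  rw [ZMod.natCast_eq_zero_iff]
  exact ⟨k, by rw [hk]; ring⟩

private lemma zd_adj_or (hq : q.Prime) {a b : {x : ZMod (2*q) // x ≠ 0 ∧ ∃ y : ZMod (2*q), y ≠ 0 ∧ x * y = 0}}
    (h : (zdGraph (2*q)).Adj a b) : a = zdCenter q hq ∨ b = zdCenter q hq := by
  have hab : (a : ZMod (2*q)) * b = 0 := h.2
  rw [zd_mul_eq_zero_iff] at hab
  have hqd : q ∣ (a:ZMod (2*q)).val * (b:ZMod (2*q)).val := dvd_trans ⟨2, mul_comm 2 q⟩ hab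
  rcases (hq.dvd_mul).1 hqd with hd | hd
  · exact Or.inl (Subtype.ext (zd_eq_q_of hq a.1 a.2.1 hd))
  · exact Or.inr (Subtype.ext (zd_eq_q_of hq b.1 b.2.1 hd))

private lemma zd_center_mem_edge (hq : q.Prime) {e : Sym2 _}
    (he : e ∈ (zdGraph (2*q)).edgeSet) : zdCenter q hq ∈ e := by
  revert he
  induction e using Sym2.ind with
  | _ a b =>
    intro he
    rw [SimpleGraph.mem_edgeSet] at he
    rcases zd_adj_or hq he with h | h <;> rw [Sym2.mem_iff] <;> [left; right] <;>
      exact h.symm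

/-- Edges of the zero-divisor graph are in bijection with non-center vertices. -/
private noncomputable def zdEdgeEquiv (hq : q.Prime) (hodd : Odd q) :
    (zdGraph (2*q)).edgeSet ≃
      {x : {x : ZMod (2*q) // x ≠ 0 ∧ ∃ y : ZMod (2*q), y ≠ 0 ∧ x * y = 0} // x ≠ zdCenter q hq} where
  toFun e := ⟨Sym2.Mem.other (zd_center_mem_edge hq e.2), by
    have hs := Sym2.other_spec (zd_center_mem_edge hq e.2)
    have he := e.2
    rw [← hs, SimpleGraph.mem_edgeSet] at he
    exact he.ne'⟩
  invFun x := ⟨s(zdCenter q hq, x.1),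
    (zdGraph (2*q)).mem_edgeSet.2 ((zd_adj_center hq hodd x.1 x.2).symm)⟩
  left_inv e := Subtype.ext (Sym2.other_spec (zd_center_mem_edge hq e.2))
  right_inv x := Subtype.ext (Sym2.congr_right.mp
    (Sym2.other_spec (zd_center_mem_edge hq
      ((zdGraph (2*q)).mem_edgeSet.2 ((zd_adj_center hq hodd x.1 x.2).symm)))))

/-- Non-center vertices are in bijection with nonzero elements of `ZMod q`. -/
private noncomputable def zdLeafEquiv (hq : q.Prime) (hodd : Odd q) :
    {x : {x : ZMod (2*q) // x ≠ 0 ∧ ∃ y : ZMod (2*q), y ≠ 0 ∧ x * y = 0} // x ≠ zdCenter q hq} ≃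
      {k : ZMod q // k ≠ 0} := by
  haveI : NeZero q := ⟨hq.pos.ne'⟩
  exact {
    toFun := fun x => ⟨((x.1.1.val / 2 : ℕ) : ZMod q), by
      have hxq : (x.1 : ZMod (2*q)) ≠ (q : ZMod (2*q)) := fun h => x.2 (Subtype.ext h)
      have h2 := zd_two_dvd_val hq hodd x.1.1 x.1.2.1 hxq x.1.2.2
      have hv0 : x.1.1.val ≠ 0 := fun h' => x.1.2.1 ((ZMod.val_eq_zero _).1 h')
      have hlt := x.1.1.val_lt
      have hlt2 : x.1.1.val / 2 < q := by omega
      have hne : x.1.1.val / 2 ≠ 0 := by omega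
      intro h
      rw [← ZMod.val_eq_zero, ZMod.val_cast_of_lt hlt2] at h
      exact hne h⟩
    invFun := fun k => by
      haveI : NeZero q := ⟨hq.pos.ne'⟩
      have hw0 : k.1.val ≠ 0 := fun h' => k.2 ((ZMod.val_eq_zero _).1 h')
      have hwlt := k.1.val_lt
      refine ⟨⟨((2 * k.1.val : ℕ) : ZMod (2*q)), ?_, (q : ZMod (2*q)), ?_, ?_⟩, ?_⟩
      · rw [Ne, ← ZMod.val_eq_zero, ZMod.val_cast_of_lt (by omega)]
        omega
      · exact (zd_center_mem hq).1
      · rw [← ZMod.natCast_zmod_val (q : ZMod (2*q)), zd_q_val hq, ← Nat.cast_mul,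
          ZMod.natCast_eq_zero_iff]
        exact ⟨k.1.val, by ring⟩
      · intro h
        have := congrArg (fun z => ZMod.val z.1) h
        simp only [zdCenter] at this
        rw [ZMod.val_cast_of_lt (by omega), zd_q_val hq] at this
        obtain ⟨j, hj⟩ := hodd
        omega
    left_inv := fun x => by
      have hxq : (x.1 : ZMod (2*q)) ≠ (q : ZMod (2*q)) := fun h => x.2 (Subtype.ext h)
      have h2 := zd_two_dvd_val hq hodd x.1.1 x.1.2.1 hxq x.1.2.2
      have hv0 : x.1.1.val ≠ 0 := fun h' => x.1.2.1 ((ZMod.val_eq_zero _).1 h')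
      have hlt := x.1.1.val_lt
      have hlt2 : x.1.1.val / 2 < q := by omega
      apply Subtype.ext; apply Subtype.ext
      show ((2 * (((x.1.1.val / 2 : ℕ) : ZMod q)).val : ℕ) : ZMod (2*q)) = x.1.1
      rw [ZMod.val_cast_of_lt hlt2, Nat.mul_div_cancel' h2, ZMod.natCast_zmod_val]
    right_inv := fun k => by
      have hw0 : k.1.val ≠ 0 := fun h' => k.2 ((ZMod.val_eq_zero _).1 h')
      have hwlt := k.1.val_lt
      apply Subtype.ext
      show ((((2 * k.1.val : ℕ) : ZMod (2*q))).val / 2 : ℕ) = (k.1 : ZMod q)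
      rw [ZMod.val_cast_of_lt (by omega), Nat.mul_div_cancel_left _ (by norm_num)]
      exact ZMod.natCast_zmod_val k.1 }

end ZD

open scoped Classical in
theorem energy_lineGraph_zdGraph_two_mul_prime
    (q : ℕ) (hq : q.Prime) (hodd : Odd q) [NeZero (2 * q)] :
    energy (zdGraph (2 * q)).lineGraph = 2 * (q : ℝ) - 4 := by
  haveI : NeZero q := ⟨hq.pos.ne'⟩
  have hq3 : 3 ≤ q := by
    have h2 := hq.two_le
    have : q ≠ 2 := by rintro rfl; exact (by decide : ¬ Odd 2) hodd
    omega
  -- count edges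
  have hcard : Fintype.card (zdGraph (2*q)).edgeSet = q - 1 := by
    rw [Fintype.card_congr ((zdEdgeEquiv hq hodd).trans (zdLeafEquiv hq hodd))]
    rw [Fintype.card_subtype_compl, ZMod.card, Fintype.card_subtype_eq]
  have hmat : ((zdGraph (2*q)).lineGraph.adjMatrix ℝ)
      = Matrix.of fun i j : (zdGraph (2*q)).edgeSet => if i = j then (0:ℝ) else 1 := by
    ext e f
    by_cases h : e = f
    · simp [h]
    · rw [Matrix.of_apply, if_neg h, SimpleGraph.adjMatrix_apply, if_pos]
      exact SimpleGraph.lineGraph_adj_iff_exists.2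
        ⟨h, zdCenter q hq, zd_center_mem_edge hq e.2, zd_center_mem_edge hq f.2⟩
  unfold energy
  rw [hmat, charpoly_K' (q-2) (by rw [hcard]; omega), roots_sum']
  rw [Nat.cast_sub (by omega)]
  push_cast
  ring
end

section
/- For distinct primes p, q with 2 < p < q, the energy of the line graph of the zero-divisor graph of Z_{pq} equals 4pq - 8p - 8q + 16, i.e., 4(p-2)(q-2). -/
open Polynomial SimpleGraph

open Polynomial Matrix

variable {ι R : Type*} [Fintype ι] [DecidableEq ι] [CommRing R]

lemma my_scalar_eq (x : R[X]) : (Matrix.scalar ι x) = x • (1 : Matrix ι ι R[X]) := by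
  ext i j
  by_cases hij : i = j <;> simp [Matrix.scalar_apply, Matrix.diagonal_apply, hij,
    Matrix.one_apply]

lemma my_charpoly_conj (P Q A : Matrix ι ι R) (h : Q * P = 1) :
    (Q * A * P).charpoly = A.charpoly := by
  have hc : charmatrix (Q * A * P) =
      Q.map C * charmatrix A * P.map C := by
    rw [charmatrix, charmatrix]
    rw [mul_sub, sub_mul]
    congr 1
    · rw [my_scalar_eq, Matrix.mul_smul, Matrix.smul_mul]
      congr 1
      rw [Matrix.mul_one, ← Matrix.map_mul, h]
      simp
    · simp [RingHom.mapMatrix_apply, ← Matrix.map_mul]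
  rw [Matrix.charpoly, hc, det_mul, det_mul, mul_right_comm, ← det_mul, ← Matrix.map_mul, h]
  simp [Matrix.charpoly]

lemma my_charpoly_diagonal (d : ι → R) :
    (Matrix.diagonal d).charpoly = ∏ i, (X - C (d i)) := by
  have : charmatrix (Matrix.diagonal d) = Matrix.diagonal (fun i => X - C (d i)) := by
    ext i j
    by_cases hij : i = j <;> simp [charmatrix_apply, Matrix.diagonal_apply, hij]
  rw [Matrix.charpoly, this, det_diagonal]
open Matrix Kronecker

section B
variable {ι : Type*} [Fintype ι] [DecidableEq ι]

noncomputable def Jm (ι : Type*) [Fintype ι] : Matrix ι ι ℝ := Matrix.of fun _ _ => 1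

noncomputable def Pm (a₀ : ι) : Matrix ι ι ℝ :=
  Matrix.of fun b a => if a = a₀ then 1 else ((if b = a then (1:ℝ) else 0) - (if b = a₀ then 1 else 0))

noncomputable def Qm (a₀ : ι) : Matrix ι ι ℝ :=
  Matrix.of fun a b => (if a = b ∧ b ≠ a₀ then (1:ℝ) else 0) +
    (if a = a₀ then (1:ℝ)/(Fintype.card ι) else -(1/(Fintype.card ι)))

noncomputable def Dm (a₀ : ι) : Matrix ι ι ℝ :=
  Matrix.diagonal (fun a => if a = a₀ then (Fintype.card ι : ℝ) else 0)

lemma QP_eq_one [Nonempty ι] (a₀ : ι) : Qm a₀ * Pm a₀ = 1 := by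
  have hk : (Fintype.card ι : ℝ) ≠ 0 := by
    simp [Fintype.card_ne_zero]
  ext a c
  rw [Matrix.mul_apply]
  by_cases hc : c = a₀
  · have hP : ∀ b, Pm a₀ b c = 1 := by intro b; simp [Pm, hc]
    have e1 : ∑ b : ι, Qm a₀ a b * Pm a₀ b c = ∑ b : ι, Qm a₀ a b :=
      Finset.sum_congr rfl fun b _ => by rw [hP b, mul_one]
    rw [e1]
    simp only [Qm, Matrix.of_apply]
    rw [Finset.sum_add_distrib]
    have h1 : ∑ b : ι, (if a = b ∧ b ≠ a₀ then (1:ℝ) else 0)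
        = if a = a₀ then 0 else 1 := by
      have e2 : ∀ b : ι, (if a = b ∧ b ≠ a₀ then (1:ℝ) else 0)
          = if b = a then (if a = a₀ then 0 else 1) else 0 := by
        intro b
        by_cases hba : b = a
        · subst hba; by_cases ha : b = a₀ <;> simp [ha]
        · rw [if_neg (fun h => hba h.1.symm), if_neg hba]
      rw [Finset.sum_congr rfl fun b _ => e2 b,
        Finset.sum_ite_eq' Finset.univ a fun _ => (if a = a₀ then (0:ℝ) else 1)]
      simp
    rw [h1, Finset.sum_const, nsmul_eq_mul, Finset.card_univ]
    by_cases ha : a = a₀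
    · rw [if_pos ha, if_pos ha, hc, ha, Matrix.one_apply_eq]
      rw [mul_one_div, div_self hk, zero_add]
    · rw [if_neg ha, if_neg ha, Matrix.one_apply_ne (by rw [hc]; exact ha)]
      rw [mul_neg, mul_one_div, div_self hk]
      ring
  · have hP : ∀ b, Pm a₀ b c = (if b = c then (1:ℝ) else 0) - (if b = a₀ then 1 else 0) := by
      intro b; simp [Pm, hc]
    have e1 : ∑ b : ι, Qm a₀ a b * Pm a₀ b c
        = ∑ b : ι, ((if b = c then Qm a₀ a b else 0) - (if b = a₀ then Qm a₀ a b else 0)) :=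
      Finset.sum_congr rfl fun b _ => by
        rw [hP b, mul_sub, mul_ite, mul_one, mul_zero, mul_ite, mul_one, mul_zero]
    rw [e1, Finset.sum_sub_distrib, Finset.sum_ite_eq' Finset.univ c fun b => Qm a₀ a b,
      Finset.sum_ite_eq' Finset.univ a₀ fun b => Qm a₀ a b]
    simp only [Finset.mem_univ, if_true, Qm, Matrix.of_apply, Matrix.one_apply]
    by_cases ha : a = c <;> simp [ha, hc] <;> ring

lemma JP_eq_PD [Nonempty ι] (a₀ : ι) : Jm ι * Pm a₀ = Pm a₀ * Dm a₀ := by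
  ext b a
  rw [Matrix.mul_apply, Dm, Matrix.mul_diagonal]
  by_cases ha : a = a₀
  · have : ∀ c, Jm ι b c * Pm a₀ c a = 1 := by intro c; simp [Jm, Pm, ha]
    rw [Finset.sum_congr rfl fun c _ => this c, Finset.sum_const, if_pos ha,
      nsmul_eq_mul, mul_one]
    simp [Pm, ha]
  · have : ∀ c, Jm ι b c * Pm a₀ c a
        = (if c = a then (1:ℝ) else 0) - (if c = a₀ then 1 else 0) := by
      intro c; simp [Jm, Pm, ha]
    rw [Finset.sum_congr rfl fun c _ => this c, Finset.sum_sub_distrib]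
    simp [ha]
end B

section C
variable {ι κ : Type*} [Fintype ι] [DecidableEq ι] [Fintype κ] [DecidableEq κ]

noncomputable def Rmat (ι κ : Type*) [Fintype ι] [DecidableEq ι] [Fintype κ] [DecidableEq κ] :
    Matrix (ι × κ) (ι × κ) ℝ :=
  ((Jm ι - 1 : Matrix ι ι ℝ) ⊗ₖ (1 : Matrix κ κ ℝ)) + ((1 : Matrix ι ι ℝ) ⊗ₖ (Jm κ - 1 : Matrix κ κ ℝ))

noncomputable def dd (a₀ : ι) (b₀ : κ) : ι × κ → ℝ := fun x =>
  (if x.1 = a₀ then (Fintype.card ι : ℝ) else 0) + (if x.2 = b₀ then (Fintype.card κ : ℝ) else 0) - 2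

lemma charpoly_Rmat [Nonempty ι] [Nonempty κ] (a₀ : ι) (b₀ : κ) :
    (Rmat ι κ).charpoly = ∏ x : ι × κ, (X - C (dd a₀ b₀ x)) := by
  have key : (Qm a₀ ⊗ₖ Qm b₀) * Rmat ι κ * (Pm a₀ ⊗ₖ Pm b₀) = Matrix.diagonal (dd a₀ b₀) := by
    have hRP : Rmat ι κ * (Pm a₀ ⊗ₖ Pm b₀)
        = (Pm a₀ ⊗ₖ Pm b₀) * Matrix.diagonal (dd a₀ b₀) := by
      have h1 : (Jm ι - 1) * Pm a₀ = Pm a₀ * (Dm a₀ - 1) := by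
        rw [sub_mul, mul_sub, JP_eq_PD, one_mul, mul_one]
      have h2 : (Jm κ - 1) * Pm b₀ = Pm b₀ * (Dm b₀ - 1) := by
        rw [sub_mul, mul_sub, JP_eq_PD, one_mul, mul_one]
      have hD1 : (Dm a₀ - 1 : Matrix ι ι ℝ) = Matrix.diagonal
          (fun a => (if a = a₀ then (Fintype.card ι : ℝ) else 0) - 1) := by
        rw [Dm, ← Matrix.diagonal_one, Matrix.diagonal_sub]
      have hD2 : (Dm b₀ - 1 : Matrix κ κ ℝ) = Matrix.diagonal
          (fun b => (if b = b₀ then (Fintype.card κ : ℝ) else 0) - 1) := by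
        rw [Dm, ← Matrix.diagonal_one, Matrix.diagonal_sub]
      have hdiag : Matrix.diagonal (dd a₀ b₀)
          = ((Dm a₀ - 1 : Matrix ι ι ℝ) ⊗ₖ (1 : Matrix κ κ ℝ))
            + ((1 : Matrix ι ι ℝ) ⊗ₖ (Dm b₀ - 1 : Matrix κ κ ℝ)) := by
        rw [hD1, hD2, ← Matrix.diagonal_one, ← Matrix.diagonal_one,
          Matrix.diagonal_kronecker_diagonal, Matrix.diagonal_kronecker_diagonal,
          Matrix.diagonal_add]
        refine congrArg Matrix.diagonal (funext fun x => ?_)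
        show (if x.1 = a₀ then (Fintype.card ι : ℝ) else 0)
            + (if x.2 = b₀ then (Fintype.card κ : ℝ) else 0) - 2 = _
        ring
      rw [Rmat, add_mul, ← Matrix.mul_kronecker_mul, ← Matrix.mul_kronecker_mul,
        h1, h2, hdiag, Matrix.mul_add, ← Matrix.mul_kronecker_mul, ← Matrix.mul_kronecker_mul]
      simp only [Matrix.one_mul, Matrix.mul_one]
    rw [Matrix.mul_assoc, hRP, ← Matrix.mul_assoc, ← Matrix.mul_kronecker_mul,
      QP_eq_one, QP_eq_one, Matrix.one_kronecker_one, Matrix.one_mul]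
  have h := my_charpoly_conj (Pm a₀ ⊗ₖ Pm b₀) (Qm a₀ ⊗ₖ Qm b₀) (Rmat ι κ)
    (by rw [← Matrix.mul_kronecker_mul, QP_eq_one, QP_eq_one, Matrix.one_kronecker_one])
  rw [key] at h
  rw [← h, my_charpoly_diagonal]
end C
section D
open Kronecker in
/-- The rook's graph on `ι × κ`. -/
def RookG (ι κ : Type*) : SimpleGraph (ι × κ) where
  Adj x y := (x.1 = y.1 ∧ x.2 ≠ y.2) ∨ (x.2 = y.2 ∧ x.1 ≠ y.1)
  symm := ⟨fun x y h => by
    rcases h with ⟨h1, h2⟩ | ⟨h1, h2⟩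
    · exact Or.inl ⟨h1.symm, h2.symm⟩
    · exact Or.inr ⟨h1.symm, h2.symm⟩⟩
  loopless := ⟨fun x h => by rcases h with ⟨_, h⟩ | ⟨_, h⟩ <;> exact h rfl⟩

variable {ι κ : Type*} [Fintype ι] [DecidableEq ι] [Fintype κ] [DecidableEq κ]

lemma adjMatrix_RookG [DecidableRel (RookG ι κ).Adj] :
    (RookG ι κ).adjMatrix ℝ = Rmat ι κ := by
  ext ⟨a, b⟩ ⟨c, d⟩
  rw [SimpleGraph.adjMatrix_apply]
  simp only [SimpleGraph.adjMatrix_apply, Rmat, Matrix.add_apply, Matrix.kronecker_apply,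
    Matrix.sub_apply, Jm, Matrix.of_apply, Matrix.one_apply, RookG]
  by_cases hac : a = c <;> by_cases hbd : b = d <;> simp [hac, hbd] <;> norm_num

lemma roots_charpoly_RookG [DecidableRel (RookG ι κ).Adj] [Nonempty ι] [Nonempty κ]
    (a₀ : ι) (b₀ : κ) :
    ((RookG ι κ).adjMatrix ℝ).charpoly.roots = Finset.univ.val.map (dd a₀ b₀) := by
  rw [adjMatrix_RookG, charpoly_Rmat a₀ b₀]
  rw [show ∏ x : ι × κ, (X - C (dd a₀ b₀ x))
      = ((Finset.univ.val.map (dd a₀ b₀)).map (fun r => X - C r)).prod from by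
    rw [Multiset.map_map]; rfl]
  exact Polynomial.roots_multiset_prod_X_sub_C _

lemma energy_RookG [DecidableRel (RookG ι κ).Adj] [Nonempty ι] [Nonempty κ]
    (a₀ : ι) (b₀ : κ) :
    energy (RookG ι κ) = ∑ x : ι × κ, |dd a₀ b₀ x| := by
  rw [energy, roots_charpoly_RookG a₀ b₀, Multiset.map_map]
  rfl

lemma sum_ite_point {β : Type*} [Fintype β] [DecidableEq β] (b₀ : β) (A B : ℝ) :
    ∑ b : β, (if b = b₀ then A else B) = A + ((Fintype.card β : ℝ) - 1) * B := by
  have h : ∀ b : β, (if b = b₀ then A else B) = B + (if b = b₀ then A - B else 0) := by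
    intro b; by_cases hb : b = b₀ <;> simp [hb]
  rw [Finset.sum_congr rfl fun b _ => h b, Finset.sum_add_distrib, Finset.sum_const,
    Finset.sum_ite_eq' Finset.univ b₀ fun _ => A - B]
  simp only [Finset.mem_univ, if_true, Finset.card_univ, nsmul_eq_mul]
  ring
end D
open scoped Classical in
theorem energy_lineGraph_zdGraph_mul_primes
    (p q : ℕ) (hp : p.Prime) (hq : q.Prime) (h2p : 2 < p) (hpq : p < q)
    [NeZero (p * q)] :
    energy (zdGraph (p * q)).lineGraph = 4 * (p : ℝ) * q - 8 * p - 8 * q + 16 := by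
  haveI : Fact p.Prime := ⟨hp⟩
  haveI : Fact q.Prime := ⟨hq⟩
  haveI : NeZero p := ⟨hp.pos.ne'⟩
  haveI : NeZero q := ⟨hq.pos.ne'⟩
  have hco : Nat.Coprime p q := (Nat.coprime_primes hp hq).mpr hpq.ne
  set crt : ZMod (p * q) ≃+* ZMod p × ZMod q := ZMod.chineseRemainder hco with hcrt
  have hcs0 : ∀ z : ZMod p × ZMod q, crt.symm z = 0 ↔ z = 0 := by
    intro z
    constructor
    · intro h
      have := congrArg crt h
      simpa using this
    · rintro rfl; simp
  have hc0 : ∀ z : ZMod (p * q), crt z = 0 ↔ z = 0 := by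
    intro z
    constructor
    · intro h
      have := congrArg crt.symm h
      simpa using this
    · rintro rfl; simp
  -- the two vertex families
  let U : {a : ZMod p // a ≠ 0} → {x : ZMod (p * q) // x ≠ 0 ∧ ∃ y : ZMod (p * q), y ≠ 0 ∧ x * y = 0} :=
    fun a => ⟨crt.symm (a.1, 0), by
      constructor
      · intro h
        rw [hcs0] at h
        exact a.2 (by simpa using congrArg Prod.fst h)
      · refine ⟨crt.symm (0, 1), ?_, ?_⟩
        · rw [Ne, hcs0]
          intro h
          have h1 : (1 : ZMod q) = 0 := by simpa using congrArg Prod.snd h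
          exact one_ne_zero h1
        · rw [← _root_.map_mul]
          simp⟩
  let W : {b : ZMod q // b ≠ 0} → {x : ZMod (p * q) // x ≠ 0 ∧ ∃ y : ZMod (p * q), y ≠ 0 ∧ x * y = 0} :=
    fun b => ⟨crt.symm (0, b.1), by
      constructor
      · intro h
        rw [hcs0] at h
        exact b.2 (by simpa using congrArg Prod.snd h)
      · refine ⟨crt.symm (1, 0), ?_, ?_⟩
        · rw [Ne, hcs0]
          intro h
          have h1 : (1 : ZMod p) = 0 := by simpa using congrArg Prod.fst h
          exact one_ne_zero h1
        · rw [← _root_.map_mul]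
          simp⟩
  have hUW : ∀ a b, U a ≠ W b := by
    intro a b h
    have h1 : crt.symm ((a : ZMod p), (0 : ZMod q)) = crt.symm (0, b.1) := congrArg Subtype.val h
    have h2 := congrArg crt h1
    simp only [RingEquiv.apply_symm_apply] at h2
    exact a.2 (by simpa using congrArg Prod.fst h2)
  have hUinj : Function.Injective U := by
    intro a a' h
    have h1 : crt.symm ((a : ZMod p), (0 : ZMod q)) = crt.symm (a'.1, 0) := congrArg Subtype.val h
    have h2 := congrArg crt h1
    simp only [RingEquiv.apply_symm_apply] at h2
    exact Subtype.ext (by simpa using congrArg Prod.fst h2)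
  have hWinj : Function.Injective W := by
    intro b b' h
    have h1 : crt.symm ((0 : ZMod p), (b : ZMod q)) = crt.symm (0, b'.1) := congrArg Subtype.val h
    have h2 := congrArg crt h1
    simp only [RingEquiv.apply_symm_apply] at h2
    exact Subtype.ext (by simpa using congrArg Prod.snd h2)
  have hAdj : ∀ a b, (zdGraph (p * q)).Adj (U a) (W b) := by
    intro a b
    refine ⟨hUW a b, ?_⟩
    show crt.symm ((a : ZMod p), (0 : ZMod q)) * crt.symm (0, b.1) = 0
    rw [← _root_.map_mul]
    simp
  let Φ : {a : ZMod p // a ≠ 0} × {b : ZMod q // b ≠ 0} → (zdGraph (p * q)).edgeSet :=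
    fun x => ⟨s(U x.1, W x.2), (zdGraph (p * q)).mem_edgeSet.mpr (hAdj x.1 x.2)⟩
  have hΦinj : Function.Injective Φ := by
    rintro ⟨a, b⟩ ⟨c, d⟩ h
    have h' : s(U a, W b) = s(U c, W d) := congrArg Subtype.val h
    rw [Sym2.eq_iff] at h'
    rcases h' with ⟨h1, h2⟩ | ⟨h1, h2⟩
    · obtain rfl := hUinj h1
      obtain rfl := hWinj h2
      rfl
    · exact absurd h1 (hUW a d)
  -- classification of vertices
  have classify : ∀ v : {x : ZMod (p * q) // x ≠ 0 ∧ ∃ y : ZMod (p * q), y ≠ 0 ∧ x * y = 0},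
      ((crt v.1).1 ≠ 0 ∧ (crt v.1).2 = 0) ∨ ((crt v.1).1 = 0 ∧ (crt v.1).2 ≠ 0) := by
    rintro ⟨v, hv0, z, hz0, hvz⟩
    have h1 : crt v * crt z = 0 := by rw [← _root_.map_mul, hvz, map_zero]
    have h11 : (crt v).1 * (crt z).1 = 0 := congrArg Prod.fst h1
    have h12 : (crt v).2 * (crt z).2 = 0 := congrArg Prod.snd h1
    have hvne : ¬((crt v).1 = 0 ∧ (crt v).2 = 0) := by
      rintro ⟨e1, e2⟩
      exact hv0 (by rw [← hc0]; exact Prod.ext e1 e2)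
    have hzne : (crt z).1 ≠ 0 ∨ (crt z).2 ≠ 0 := by
      by_contra hcon
      push_neg at hcon
      exact hz0 (by rw [← hc0]; exact Prod.ext hcon.1 hcon.2)
    rcases hzne with h | h
    · have hv1 : (crt v).1 = 0 := by
        rcases mul_eq_zero.mp h11 with h' | h'
        · exact h'
        · exact absurd h' h
      right
      exact ⟨hv1, fun h2 => hvne ⟨hv1, h2⟩⟩
    · have hv2 : (crt v).2 = 0 := by
        rcases mul_eq_zero.mp h12 with h' | h'
        · exact h'
        · exact absurd h' h
      left
      exact ⟨fun h1' => hvne ⟨h1', hv2⟩, hv2⟩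
  have repU : ∀ (v : {x : ZMod (p * q) // x ≠ 0 ∧ ∃ y : ZMod (p * q), y ≠ 0 ∧ x * y = 0})
      (h : (crt v.1).1 ≠ 0), (crt v.1).2 = 0 → v = U ⟨(crt v.1).1, h⟩ := by
    intro v h h2
    refine Subtype.ext ?_
    show v.1 = crt.symm ((crt v.1).1, 0)
    rw [show ((crt v.1).1, (0 : ZMod q)) = crt v.1 from Prod.ext rfl h2.symm]
    simp
  have repW : ∀ (v : {x : ZMod (p * q) // x ≠ 0 ∧ ∃ y : ZMod (p * q), y ≠ 0 ∧ x * y = 0})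
      (h : (crt v.1).2 ≠ 0), (crt v.1).1 = 0 → v = W ⟨(crt v.1).2, h⟩ := by
    intro v h h1
    refine Subtype.ext ?_
    show v.1 = crt.symm (0, (crt v.1).2)
    rw [show ((0 : ZMod p), (crt v.1).2) = crt v.1 from Prod.ext h1.symm rfl]
    simp
  have hΦsurj : Function.Surjective Φ := by
    rintro ⟨e, he⟩
    revert he
    induction e using Sym2.ind with
    | _ x y =>
      intro he
      have hadj := (zdGraph (p * q)).mem_edgeSet.mp he
      obtain ⟨hxy, hmul⟩ := hadj
      have hprod : crt x.1 * crt y.1 = 0 := by rw [← _root_.map_mul, hmul, map_zero]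
      have hprod1 : (crt x.1).1 * (crt y.1).1 = 0 := congrArg Prod.fst hprod
      have hprod2 : (crt x.1).2 * (crt y.1).2 = 0 := congrArg Prod.snd hprod
      rcases classify x with ⟨hx1, hx2⟩ | ⟨hx1, hx2⟩
      · -- x = U _, so y must be W _
        have hy1 : (crt y.1).1 = 0 := by
          rcases mul_eq_zero.mp hprod1 with h' | h'
          · exact absurd h' hx1
          · exact h'
        have hy2 : (crt y.1).2 ≠ 0 := by
          rcases classify y with ⟨h1', h2'⟩ | ⟨h1', h2'⟩
          · exact absurd hy1 h1'
          · exact h2'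
        refine ⟨(⟨(crt x.1).1, hx1⟩, ⟨(crt y.1).2, hy2⟩), ?_⟩
        refine Subtype.ext ?_
        show s(U _, W _) = s(x, y)
        rw [← repU x hx1 hx2, ← repW y hy2 hy1]
      · -- x = W _, so y must be U _
        have hy2 : (crt y.1).2 = 0 := by
          rcases mul_eq_zero.mp hprod2 with h' | h'
          · exact absurd h' hx2
          · exact h'
        have hy1 : (crt y.1).1 ≠ 0 := by
          rcases classify y with ⟨h1', h2'⟩ | ⟨h1', h2'⟩
          · exact h1'
          · exact absurd hy2 h2'
        refine ⟨(⟨(crt y.1).1, hy1⟩, ⟨(crt x.1).2, hx2⟩), ?_⟩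
        refine Subtype.ext ?_
        show s(U _, W _) = s(x, y)
        rw [← repU y hy1 hy2, ← repW x hx2 hx1, Sym2.eq_swap]
  let Φe : {a : ZMod p // a ≠ 0} × {b : ZMod q // b ≠ 0} ≃ (zdGraph (p * q)).edgeSet :=
    Equiv.ofBijective Φ ⟨hΦinj, hΦsurj⟩
  -- adjacency correspondence
  have hadjiff : ∀ u v, (zdGraph (p * q)).lineGraph.Adj (Φe u) (Φe v)
      ↔ (RookG {a : ZMod p // a ≠ 0} {b : ZMod q // b ≠ 0}).Adj u v := by
    rintro ⟨a, b⟩ ⟨c, d⟩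
    rw [SimpleGraph.lineGraph_adj_iff_exists]
    have hne : (Φe (a, b) ≠ Φe (c, d)) ↔ ¬(a = c ∧ b = d) := by
      rw [Φe.injective.ne_iff]
      constructor
      · intro h hcon
        exact h (Prod.ext hcon.1 hcon.2)
      · intro h hcon
        exact h ⟨congrArg Prod.fst hcon, congrArg Prod.snd hcon⟩
    have hmem : (∃ v, v ∈ ((Φe (a, b) : Sym2 {x : ZMod (p * q) // x ≠ 0 ∧ ∃ y : ZMod (p * q), y ≠ 0 ∧ x * y = 0}))
          ∧ v ∈ ((Φe (c, d) : Sym2 {x : ZMod (p * q) // x ≠ 0 ∧ ∃ y : ZMod (p * q), y ≠ 0 ∧ x * y = 0})))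
        ↔ (a = c ∨ b = d) := by
      show (∃ v, v ∈ s(U a, W b) ∧ v ∈ s(U c, W d)) ↔ _
      constructor
      · rintro ⟨v, hv1, hv2⟩
        rw [Sym2.mem_iff] at hv1 hv2
        rcases hv1 with rfl | rfl <;> rcases hv2 with h | h
        · exact Or.inl (congrArg Subtype.val (hUinj h)) |>.imp (fun h' => Subtype.ext h') id
        · exact absurd h (hUW a d)
        · exact absurd h.symm (hUW c b)
        · exact Or.inr (hWinj h)
      · rintro (rfl | rfl)
        · exact ⟨U a, Sym2.mem_mk_left _ _, Sym2.mem_mk_left _ _⟩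
        · exact ⟨W b, Sym2.mem_mk_right _ _, Sym2.mem_mk_right _ _⟩
    rw [hne, hmem]
    show _ ↔ ((a = c ∧ b ≠ d) ∨ (b = d ∧ a ≠ c))
    constructor
    · rintro ⟨h1, h2 | h2⟩
      · exact Or.inl ⟨h2, fun hbd => h1 ⟨h2, hbd⟩⟩
      · exact Or.inr ⟨h2, fun hac => h1 ⟨hac, h2⟩⟩
    · rintro (⟨h1, h2⟩ | ⟨h1, h2⟩)
      · exact ⟨fun hcon => h2 hcon.2, Or.inl h1⟩
      · exact ⟨fun hcon => h2 hcon.1, Or.inr h1⟩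
  -- matrix correspondence
  have hM : (zdGraph (p * q)).lineGraph.adjMatrix ℝ
      = ((RookG {a : ZMod p // a ≠ 0} {b : ZMod q // b ≠ 0}).adjMatrix ℝ).submatrix
          Φe.symm Φe.symm := by
    ext u v
    rw [Matrix.submatrix_apply]
    have h := hadjiff (Φe.symm u) (Φe.symm v)
    rw [Φe.apply_symm_apply, Φe.apply_symm_apply] at h
    simp only [SimpleGraph.adjMatrix_apply]
    exact if_congr h rfl rfl
  have hchar : ((zdGraph (p * q)).lineGraph.adjMatrix ℝ).charpoly
      = ((RookG {a : ZMod p // a ≠ 0} {b : ZMod q // b ≠ 0}).adjMatrix ℝ).charpoly := by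
    rw [hM]
    rw [show ((RookG {a : ZMod p // a ≠ 0} {b : ZMod q // b ≠ 0}).adjMatrix ℝ).submatrix
        Φe.symm Φe.symm
      = Matrix.reindex Φe Φe ((RookG {a : ZMod p // a ≠ 0} {b : ZMod q // b ≠ 0}).adjMatrix ℝ)
      from rfl]
    exact Matrix.charpoly_reindex Φe _
  haveI : Nonempty {a : ZMod p // a ≠ 0} := ⟨⟨1, one_ne_zero⟩⟩
  haveI : Nonempty {b : ZMod q // b ≠ 0} := ⟨⟨1, one_ne_zero⟩⟩
  have henergy : energy (zdGraph (p * q)).lineGraph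
      = energy (RookG {a : ZMod p // a ≠ 0} {b : ZMod q // b ≠ 0}) := by
    rw [energy, energy, hchar]
  rw [henergy, energy_RookG ⟨1, one_ne_zero⟩ ⟨1, one_ne_zero⟩]
  -- cardinalities
  have hkα : (Fintype.card {a : ZMod p // a ≠ 0} : ℝ) = (p : ℝ) - 1 := by
    have h1 : Fintype.card {a : ZMod p // a ≠ 0} = p - 1 := by
      have h2 := Fintype.card_subtype_compl (fun a : ZMod p => a = 0)
      rw [Fintype.card_subtype_eq, ZMod.card] at h2
      rw [← h2]
    rw [h1, Nat.cast_sub hp.one_lt.le, Nat.cast_one]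
  have hkβ : (Fintype.card {b : ZMod q // b ≠ 0} : ℝ) = (q : ℝ) - 1 := by
    have h1 : Fintype.card {b : ZMod q // b ≠ 0} = q - 1 := by
      have h2 := Fintype.card_subtype_compl (fun b : ZMod q => b = 0)
      rw [Fintype.card_subtype_eq, ZMod.card] at h2
      rw [← h2]
    rw [h1, Nat.cast_sub hq.one_lt.le, Nat.cast_one]
  have hp3 : (3 : ℝ) ≤ (p : ℝ) := by exact_mod_cast h2p
  have hq4 : (4 : ℝ) ≤ (q : ℝ) := by
    have : 4 ≤ q := by omega
    exact_mod_cast this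
  rw [Fintype.sum_prod_type]
  set a₀ : {a : ZMod p // a ≠ 0} := ⟨1, one_ne_zero⟩ with ha₀
  set b₀ : {b : ZMod q // b ≠ 0} := ⟨1, one_ne_zero⟩ with hb₀
  have step1 : ∀ a : {a : ZMod p // a ≠ 0}, ∑ b : {b : ZMod q // b ≠ 0}, |dd a₀ b₀ (a, b)|
      = if a = a₀ then |((p:ℝ)-1) + ((q:ℝ)-1) - 2| + (((q:ℝ)-1) - 1) * |((p:ℝ)-1) + 0 - 2|
        else |0 + ((q:ℝ)-1) - 2| + (((q:ℝ)-1) - 1) * |(0:ℝ) + 0 - 2| := by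
    intro a
    have e : ∀ b : {b : ZMod q // b ≠ 0}, |dd a₀ b₀ (a, b)|
        = if b = b₀ then |(if a = a₀ then ((p:ℝ)-1) else 0) + ((q:ℝ)-1) - 2|
          else |(if a = a₀ then ((p:ℝ)-1) else 0) + 0 - 2| := by
      intro b
      show |(if a = a₀ then (Fintype.card {a : ZMod p // a ≠ 0} : ℝ) else 0)
          + (if b = b₀ then (Fintype.card {b : ZMod q // b ≠ 0} : ℝ) else 0) - 2| = _
      rw [hkα, hkβ]
      by_cases hb : b = b₀ <;> simp [hb]
    rw [Finset.sum_congr rfl fun b _ => e b, sum_ite_point b₀ _ _, hkβ]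
    by_cases ha : a = a₀ <;> simp [ha]
  rw [Finset.sum_congr rfl fun a _ => step1 a, sum_ite_point a₀ _ _, hkα]
  have habs1 : |((p:ℝ)-1) + ((q:ℝ)-1) - 2| = ((p:ℝ)-1) + ((q:ℝ)-1) - 2 :=
    abs_of_nonneg (by linarith)
  have habs2 : |((p:ℝ)-1) + 0 - 2| = ((p:ℝ)-1) + 0 - 2 := abs_of_nonneg (by linarith)
  have habs3 : |(0:ℝ) + ((q:ℝ)-1) - 2| = 0 + ((q:ℝ)-1) - 2 := abs_of_nonneg (by linarith)
  have habs4 : |(0:ℝ) + 0 - 2| = 2 := by norm_num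
  rw [habs1, habs2, habs3, habs4]
  ring
end

section
/- For a prime p ≥ 5, the energy of the line graph of the zero-divisor graph of Z_{p^2} equals 2p^2 - 10p + 8. -/
open Polynomial SimpleGraph

open Polynomial Matrix SimpleGraph

open Polynomial Matrix

lemma my_eval_charpoly {ι : Type*} [Fintype ι] [DecidableEq ι] (A : Matrix ι ι ℝ) (x : ℝ) :
    A.charpoly.eval x = (x • (1 : Matrix ι ι ℝ) - A).det := by
  rw [Matrix.charpoly, ← Polynomial.coe_evalRingHom, RingHom.map_det]
  congr 1
  ext i j
  by_cases h : i = j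
  · subst h; simp [Matrix.charmatrix_apply_eq, Matrix.one_apply]
  · simp [Matrix.charmatrix_apply_ne _ _ _ h, Matrix.one_apply, h]

lemma my_charpoly_add_smul_one {ι : Type*} [Fintype ι] [DecidableEq ι] (A : Matrix ι ι ℝ) (c : ℝ) :
    (A + c • (1 : Matrix ι ι ℝ)).charpoly = A.charpoly.comp (X - C c) := by
  apply Polynomial.funext
  intro x
  rw [eval_comp, my_eval_charpoly, my_eval_charpoly]
  simp only [eval_sub, eval_X, eval_C]
  congr 1
  rw [sub_smul]
  abel

lemma my_charpoly_mul_comm {m n : Type*} [Fintype m] [Fintype n] [DecidableEq m] [DecidableEq n]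
    (B : Matrix m n ℝ) :
    X ^ (Fintype.card n) * (B * Bᵀ).charpoly = X ^ (Fintype.card m) * (Bᵀ * B).charpoly := by
  apply Polynomial.eq_of_infinite_eval_eq
  apply Set.Infinite.mono (s := {x : ℝ | x ≠ 0})
  swap
  · have : ({x : ℝ | x ≠ 0}) = ({0} : Set ℝ)ᶜ := by ext; simp
    rw [this]
    exact (Set.finite_singleton 0).infinite_compl
  intro x hx
  simp only [Set.mem_setOf_eq, eval_mul, eval_pow, eval_X, my_eval_charpoly]
  have h1 : x • (1 : Matrix m m ℝ) - B * Bᵀ = x • ((1 : Matrix m m ℝ) - B * (x⁻¹ • Bᵀ)) := by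
    rw [Matrix.mul_smul, smul_sub, smul_smul, mul_inv_cancel₀ hx, one_smul]
  have h2 : x • (1 : Matrix n n ℝ) - Bᵀ * B = x • ((1 : Matrix n n ℝ) - (x⁻¹ • Bᵀ) * B) := by
    rw [Matrix.smul_mul, smul_sub, smul_smul, mul_inv_cancel₀ hx, one_smul]
  rw [h1, h2, Matrix.det_smul, Matrix.det_smul, Matrix.det_one_sub_mul_comm]
  ring

open SimpleGraph

lemma my_charpoly_allOnes (ι : Type*) [Fintype ι] [DecidableEq ι] [Nonempty ι] :
    (Matrix.of (fun _ _ => (1:ℝ)) : Matrix ι ι ℝ).charpoly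
      = X ^ (Fintype.card ι - 1) * (X - C (Fintype.card ι : ℝ)) := by
  set B : Matrix ι (Fin 1) ℝ := Matrix.of fun _ _ => 1 with hB
  have h1 : B * Bᵀ = (Matrix.of (fun _ _ => (1:ℝ)) : Matrix ι ι ℝ) := by
    ext i j; simp [Matrix.mul_apply, hB]
  have h3 : (Bᵀ * B).charpoly = X - C (Fintype.card ι : ℝ) := by
    have h2 : (Bᵀ * B) 0 0 = (Fintype.card ι : ℝ) := by
      simp only [Matrix.mul_apply, hB, Matrix.transpose_apply, Matrix.of_apply, mul_one]
      rw [Finset.sum_const, Finset.card_univ, nsmul_eq_mul, mul_one]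
    rw [Matrix.charpoly, Matrix.det_fin_one, charmatrix_apply_eq, h2]
  have key := my_charpoly_mul_comm B
  rw [h1, h3, Fintype.card_fin, pow_one] at key
  apply mul_left_cancel₀ (X_ne_zero (R := ℝ))
  rw [key, ← mul_assoc, ← pow_succ', Nat.sub_add_cancel Fintype.card_pos]

lemma sym2_exists {V : Type*} (z : Sym2 V) : ∃ a b, z = s(a, b) :=
  Sym2.ind (fun a b => ⟨a, b, rfl⟩) z

lemma myIte (P Q : Prop) [Decidable P] [Decidable Q] :
    (if P then (1:ℝ) else 0) * (if Q then 1 else 0) = if P ∧ Q then 1 else 0 := by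
  split_ifs <;> simp_all

variable {V : Type*} [Fintype V] [DecidableEq V] [Fintype (⊤ : SimpleGraph V).edgeSet]

open scoped Classical in
noncomputable def incB (V : Type*) [Fintype V] [DecidableEq V]
    [Fintype (⊤ : SimpleGraph V).edgeSet] :
    Matrix V (⊤ : SimpleGraph V).edgeSet ℝ :=
  Matrix.of fun v e => if v ∈ (e : Sym2 V) then 1 else 0

lemma incB_mul_transpose :
    incB V * (incB V)ᵀ
      = Matrix.of (fun _ _ => (1:ℝ)) + ((Fintype.card V : ℝ) - 2) • 1 := by
  classical
  ext u v
  simp only [Matrix.mul_apply, incB, Matrix.transpose_apply, Matrix.of_apply,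
    Matrix.add_apply, Matrix.smul_apply, Matrix.one_apply, smul_eq_mul]
  simp_rw [myIte]
  by_cases huv : u = v
  · subst huv
    simp only [and_self, if_true, mul_one]
    rw [Finset.sum_boole]
    have hcard : (Finset.univ.filter (fun e : (⊤ : SimpleGraph V).edgeSet => u ∈ (e : Sym2 V))).card
        = (⊤ : SimpleGraph V).degree u := by
      rw [← Fintype.card_subtype, ← card_incidenceSet_eq_degree]
      apply Fintype.card_congr
      exact (Equiv.subtypeSubtypeEquivSubtypeInter
          (fun e => e ∈ (⊤ : SimpleGraph V).edgeSet) (fun e => u ∈ e)).trans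
        (Equiv.subtypeEquivRight fun x => Iff.rfl)
    have hne : Nonempty V := ⟨u⟩
    rw [hcard, complete_graph_degree, Nat.cast_sub Fintype.card_pos]
    ring
  · simp only [huv, if_false, mul_zero, add_zero]
    rw [Finset.sum_boole]
    have hfil : (Finset.univ.filter
        (fun e : (⊤ : SimpleGraph V).edgeSet => u ∈ (e : Sym2 V) ∧ v ∈ (e : Sym2 V)))
        = {⟨s(u, v), by simp [huv]⟩} := by
      ext e
      simp only [Finset.mem_filter, Finset.mem_univ, true_and, Finset.mem_singleton]
      constructor
      · rintro ⟨h1, h2⟩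
        exact Subtype.ext ((Sym2.mem_and_mem_iff huv).mp ⟨h1, h2⟩)
      · rintro rfl
        simp
    rw [hfil]
    simp

lemma transpose_mul_incB [DecidableRel (⊤ : SimpleGraph V).lineGraph.Adj] :
    (incB V)ᵀ * incB V
      = (⊤ : SimpleGraph V).lineGraph.adjMatrix ℝ + (2 : ℝ) • 1 := by
  classical
  ext e f
  simp only [Matrix.mul_apply, incB, Matrix.transpose_apply, Matrix.of_apply,
    Matrix.add_apply, Matrix.smul_apply, Matrix.one_apply, smul_eq_mul,
    SimpleGraph.adjMatrix_apply]
  simp_rw [myIte]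
  rw [Finset.sum_boole]
  by_cases hef : e = f
  · subst hef
    simp only [and_self, if_true, mul_one]
    obtain ⟨a, b, hab⟩ := sym2_exists (e : Sym2 V)
    have hne : a ≠ b := by
      have h := e.prop
      rw [hab, SimpleGraph.mem_edgeSet, SimpleGraph.top_adj] at h
      exact h
    have hfil : (Finset.univ.filter (fun v => v ∈ (e : Sym2 V))) = {a, b} := by
      ext v
      simp [hab, Sym2.mem_iff]
    rw [hfil, Finset.card_pair hne]
    simp [SimpleGraph.irrefl]
  · simp only [hef, if_false, mul_zero, add_zero]
    have hadj : (⊤ : SimpleGraph V).lineGraph.Adj e f ↔ ∃ v, v ∈ (e : Sym2 V) ∧ v ∈ (f : Sym2 V) := by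
      rw [SimpleGraph.lineGraph_adj_iff_exists]
      simp [hef]
    by_cases hsh : ∃ v, v ∈ (e : Sym2 V) ∧ v ∈ (f : Sym2 V)
    · obtain ⟨v0, hv1, hv2⟩ := hsh
      have hfil : (Finset.univ.filter (fun v => v ∈ (e : Sym2 V) ∧ v ∈ (f : Sym2 V))) = {v0} := by
        ext w
        simp only [Finset.mem_filter, Finset.mem_univ, true_and, Finset.mem_singleton]
        constructor
        · rintro ⟨hw1, hw2⟩
          by_contra hwv
          have he' : (e : Sym2 V) = s(v0, w) := (Sym2.mem_and_mem_iff (Ne.symm hwv)).mp ⟨hv1, hw1⟩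
          have hf' : (f : Sym2 V) = s(v0, w) := (Sym2.mem_and_mem_iff (Ne.symm hwv)).mp ⟨hv2, hw2⟩
          exact hef (Subtype.ext (he'.trans hf'.symm))
        · rintro rfl
          exact ⟨hv1, hv2⟩
      rw [hfil]
      simp [hadj.mpr ⟨v0, hv1, hv2⟩]
    · have hfil : (Finset.univ.filter (fun v => v ∈ (e : Sym2 V) ∧ v ∈ (f : Sym2 V))) = ∅ := by
        ext w
        simp only [Finset.mem_filter, Finset.mem_univ, true_and, Finset.notMem_empty, iff_false]
        exact fun h => hsh ⟨w, h⟩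
      rw [hfil]
      have : ¬ (⊤ : SimpleGraph V).lineGraph.Adj e f := fun h => hsh (hadj.mp h)
      simp [this]

lemma energy_lineGraph_top (V : Type*) [Fintype V] [DecidableEq V]
    [Fintype (⊤ : SimpleGraph V).edgeSet]
    [DecidableRel (⊤ : SimpleGraph V).lineGraph.Adj]
    (hV : 4 ≤ Fintype.card V) :
    energy (⊤ : SimpleGraph V).lineGraph
      = 2 * (Fintype.card V : ℝ) ^ 2 - 6 * (Fintype.card V : ℝ) := by
  classical
  set n := Fintype.card V with hn
  set m := Fintype.card (⊤ : SimpleGraph V).edgeSet with hm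
  have hnV : Nonempty V := Fintype.card_pos_iff.mp (by omega)
  -- edge count
  have hm2 : 2 * m = n * (n - 1) := by
    have h1 : m = n.choose 2 := by
      rw [hm, ← Sym2.card_subtype_not_diag]
      apply Fintype.card_congr
      apply Equiv.subtypeEquivRight
      intro e
      simp [SimpleGraph.edgeSet_top]
    have h2 : 2 ∣ n * (n - 1) := by
      rcases Nat.even_or_odd n with h | h
      · exact Dvd.dvd.mul_right h.two_dvd _
      · exact Dvd.dvd.mul_left (Nat.Odd.sub_odd h odd_one).two_dvd _
    rw [h1, Nat.choose_two_right, Nat.mul_div_cancel' h2]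
  have hmn : n ≤ m := by
    have h3 : n * 2 ≤ n * (n - 1) := Nat.mul_le_mul_left n (by omega)
    omega
  -- charpoly of B * Bᵀ
  have hBBt : (incB V * (incB V)ᵀ).charpoly
      = (X - C ((n : ℝ) - 2)) ^ (n - 1) * (X - C (2 * (n : ℝ) - 2)) := by
    rw [incB_mul_transpose, my_charpoly_add_smul_one, my_charpoly_allOnes]
    simp only [mul_comp, pow_comp, X_comp, sub_comp, C_comp]
    rw [sub_sub, ← C_add, show ((n : ℝ) - 2) + n = 2 * (n : ℝ) - 2 by ring]
  -- charpoly of Bᵀ * B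
  have key := my_charpoly_mul_comm (incB V)
  rw [hBBt, ← hn, ← hm] at key
  have hBtB : ((incB V)ᵀ * incB V).charpoly
      = X ^ (m - n) * ((X - C ((n : ℝ) - 2)) ^ (n - 1) * (X - C (2 * (n : ℝ) - 2))) := by
    apply mul_left_cancel₀ (pow_ne_zero n (X_ne_zero (R := ℝ)))
    have hx : (X : ℝ[X]) ^ m = X ^ n * X ^ (m - n) := by
      rw [← pow_add]
      congr 1
      omega
    rw [← key, hx]
    ring
  -- adjacency matrix of the line graph
  have hA : (⊤ : SimpleGraph V).lineGraph.adjMatrix ℝ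
      = (incB V)ᵀ * incB V + (-2 : ℝ) • 1 := by
    rw [transpose_mul_incB, add_assoc, ← add_smul]
    norm_num
  have hchar : ((⊤ : SimpleGraph V).lineGraph.adjMatrix ℝ).charpoly
      = (X - C (-2)) ^ (m - n)
        * ((X - C ((n : ℝ) - 4)) ^ (n - 1) * (X - C (2 * (n : ℝ) - 4))) := by
    rw [hA, my_charpoly_add_smul_one, hBtB]
    simp only [mul_comp, pow_comp, X_comp, sub_comp, C_comp]
    congr 2
    · rw [sub_sub, ← C_add, show (-2 + ((n : ℝ) - 2)) = (n : ℝ) - 4 by ring]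
    · rw [sub_sub, ← C_add, show (-2 + (2 * (n : ℝ) - 2)) = 2 * (n : ℝ) - 4 by ring]
  -- roots
  have hroots : ((⊤ : SimpleGraph V).lineGraph.adjMatrix ℝ).charpoly.roots
      = (m - n) • ({-2} : Multiset ℝ) + ((n - 1) • ({(n : ℝ) - 4} : Multiset ℝ)
        + ({2 * (n : ℝ) - 4} : Multiset ℝ)) := by
    rw [hchar, Polynomial.roots_mul, Polynomial.roots_mul, Polynomial.roots_pow,
      Polynomial.roots_pow, Polynomial.roots_X_sub_C, Polynomial.roots_X_sub_C,
      Polynomial.roots_X_sub_C]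
    · exact (((monic_X_sub_C _).pow _).mul (monic_X_sub_C _)).ne_zero
    · exact (((monic_X_sub_C (-2:ℝ)).pow _).mul
        (((monic_X_sub_C _).pow _).mul (monic_X_sub_C _))).ne_zero
  -- sum of absolute values
  rw [energy, hroots]
  rw [Multiset.map_add, Multiset.map_add, Multiset.sum_add, Multiset.sum_add,
    Multiset.nsmul_singleton, Multiset.nsmul_singleton, Multiset.map_replicate,
    Multiset.map_replicate, Multiset.map_singleton, Multiset.sum_replicate,
    Multiset.sum_replicate, Multiset.sum_singleton]
  have h4n : (4 : ℝ) ≤ (n : ℝ) := by exact_mod_cast hV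
  rw [show |(-2 : ℝ)| = 2 by norm_num, abs_of_nonneg (by linarith : (0:ℝ) ≤ (n : ℝ) - 4),
    abs_of_nonneg (by linarith : (0:ℝ) ≤ 2 * (n : ℝ) - 4)]
  have hmr : 2 * (m : ℝ) = (n : ℝ) * ((n : ℝ) - 1) := by
    have := congrArg (Nat.cast : ℕ → ℝ) hm2
    push_cast [Nat.cast_sub (show 1 ≤ n by omega)] at this
    linarith
  rw [nsmul_eq_mul, nsmul_eq_mul, Nat.cast_sub hmn, Nat.cast_sub (show 1 ≤ n by omega)]
  push_cast
  linear_combination hmr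


variable (p : ℕ)

lemma dvd_of_zd (hp : p.Prime) [NeZero (p ^ 2)] (x : ZMod (p ^ 2))
    (hx : ∃ y : ZMod (p ^ 2), y ≠ 0 ∧ x * y = 0) : p ∣ x.val := by
  by_contra hdvd
  obtain ⟨y, hy0, hxy⟩ := hx
  have hcop : Nat.Coprime x.val (p ^ 2) :=
    Nat.Coprime.pow_right _ (Nat.coprime_comm.mp ((Nat.Prime.coprime_iff_not_dvd hp).mpr hdvd))
  have hunit : IsUnit x := by
    have := (ZMod.isUnit_iff_coprime x.val (p ^ 2)).mpr hcop
    rwa [ZMod.natCast_rightInverse x] at this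
  obtain ⟨u, rfl⟩ := hunit
  have : y = 0 := by
    have h2 := congrArg (fun z => ((u⁻¹ : (ZMod (p ^ 2))ˣ) : ZMod (p ^ 2)) * z) hxy
    simpa [← mul_assoc] using h2
  exact hy0 this

lemma zd_eq_top (hp : p.Prime) [NeZero (p ^ 2)] : zdGraph (p ^ 2) = ⊤ := by
  ext a b
  show (a ≠ b ∧ (a : ZMod (p ^ 2)) * b = 0) ↔ a ≠ b
  constructor
  · rintro ⟨h1, _⟩
    exact h1
  · intro hab
    refine ⟨hab, ?_⟩
    have ha := dvd_of_zd p hp a.val a.prop.2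
    have hb := dvd_of_zd p hp b.val b.prop.2
    have h2 : (p : ℕ) ^ 2 ∣ (a : ZMod (p ^ 2)).val * (b : ZMod (p ^ 2)).val := by
      have h3 := mul_dvd_mul ha hb
      rwa [← pow_two] at h3
    calc (a : ZMod (p ^ 2)) * b
        = (((a : ZMod (p ^ 2)).val * (b : ZMod (p ^ 2)).val : ℕ) : ZMod (p ^ 2)) := by
          push_cast [ZMod.natCast_rightInverse (a : ZMod (p ^ 2)),
            ZMod.natCast_rightInverse (b : ZMod (p ^ 2))]
          rfl
      _ = 0 := (ZMod.natCast_eq_zero_iff _ _).mpr h2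

lemma card_zd (hp : p.Prime) [NeZero (p ^ 2)]
    [Fintype {x : ZMod (p ^ 2) // x ≠ 0 ∧ ∃ y : ZMod (p ^ 2), y ≠ 0 ∧ x * y = 0}] :
    Fintype.card {x : ZMod (p ^ 2) // x ≠ 0 ∧ ∃ y : ZMod (p ^ 2), y ≠ 0 ∧ x * y = 0}
      = p - 1 := by
  classical
  haveI : NeZero p := ⟨hp.pos.ne'⟩
  have hpp : p < p ^ 2 := by
    have h1 := hp.one_lt
    nlinarith [hp.pos]
  have hvlt : ∀ a : ZMod p, p * a.val < p ^ 2 := by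
    intro a
    rw [pow_two]
    exact Nat.mul_lt_mul_of_le_of_lt (le_refl p) (ZMod.val_lt a) hp.pos
  have hpz : (p : ZMod (p ^ 2)) ≠ 0 := by
    intro h
    have h1 := (ZMod.natCast_eq_zero_iff _ _).mp h
    have h2 := Nat.le_of_dvd hp.pos h1
    omega
  have key : ∀ a : {a : ZMod p // a ≠ 0},
      (((p * (a : ZMod p).val : ℕ) : ZMod (p ^ 2)) ≠ 0 ∧
        ∃ y : ZMod (p ^ 2), y ≠ 0 ∧ ((p * (a : ZMod p).val : ℕ) : ZMod (p ^ 2)) * y = 0) := by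
    intro a
    constructor
    · intro h
      have hd := (ZMod.natCast_eq_zero_iff _ _).mp h
      have h0 := Nat.eq_zero_of_dvd_of_lt hd (hvlt a)
      have hv0 : (a : ZMod p).val ≠ 0 := fun hh => a.prop ((ZMod.val_eq_zero _).mp hh)
      exact hv0 ((Nat.mul_eq_zero.mp h0).resolve_left hp.pos.ne')
    · exact ⟨(p : ZMod (p ^ 2)), hpz, by
        rw [← Nat.cast_mul]
        exact (ZMod.natCast_eq_zero_iff _ _).mpr ⟨(a : ZMod p).val, by ring⟩⟩
  set f : {a : ZMod p // a ≠ 0} →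
      {x : ZMod (p ^ 2) // x ≠ 0 ∧ ∃ y : ZMod (p ^ 2), y ≠ 0 ∧ x * y = 0} :=
    fun a => ⟨((p * (a : ZMod p).val : ℕ) : ZMod (p ^ 2)), key a⟩ with hfdef
  have hbij : Function.Bijective f := by
    constructor
    · intro a b hab
      have h1 := congrArg (fun x => ZMod.val (x : ZMod (p ^ 2))) (Subtype.ext_iff.mp hab)
      simp only [hfdef] at h1
      rw [ZMod.val_cast_of_lt (hvlt a), ZMod.val_cast_of_lt (hvlt b)] at h1
      have h2 : (a : ZMod p).val = (b : ZMod p).val := Nat.eq_of_mul_eq_mul_left hp.pos h1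
      have h3 : (a : ZMod p) = (b : ZMod p) := by
        rw [← ZMod.natCast_rightInverse (a : ZMod p), ← ZMod.natCast_rightInverse (b : ZMod p), h2]
      exact Subtype.ext h3
    · rintro ⟨x, hx0, hxzd⟩
      obtain ⟨k, hk⟩ := dvd_of_zd p hp x hxzd
      have hklt : k < p := by
        have := ZMod.val_lt x
        rw [hk, pow_two] at this
        exact Nat.lt_of_mul_lt_mul_left this
      have hk0 : k ≠ 0 := by
        intro h
        apply hx0
        rw [← ZMod.natCast_rightInverse x, hk, h, mul_zero, Nat.cast_zero]
      refine ⟨⟨(k : ZMod p), ?_⟩, ?_⟩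
      · intro h
        rw [← ZMod.val_eq_zero, ZMod.val_cast_of_lt hklt] at h
        exact hk0 h
      · apply Subtype.ext
        show (((p * ((k : ZMod p)).val : ℕ)) : ZMod (p ^ 2)) = x
        rw [ZMod.val_cast_of_lt hklt, ← hk, ZMod.natCast_rightInverse x]
  rw [← Fintype.card_of_bijective hbij]
  have h1 : Fintype.card {a : ZMod p // a ≠ 0}
      = Fintype.card (ZMod p) - Fintype.card {a : ZMod p // a = 0} := by
    exact Fintype.card_subtype_compl _
  rw [h1, Fintype.card_subtype_eq (0 : ZMod p), ZMod.card]

open scoped Classical in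
theorem energy_lineGraph_zdGraph_prime_sq
    (p : ℕ) (hp : p.Prime) (hp5 : 5 ≤ p) [NeZero (p ^ 2)] :
    energy (zdGraph (p ^ 2)).lineGraph = 2 * (p : ℝ) ^ 2 - 10 * p + 8 := by
  have h := zd_eq_top p hp
  rw [h]
  have hcard : Fintype.card
      {x : ZMod (p ^ 2) // x ≠ 0 ∧ ∃ y : ZMod (p ^ 2), y ≠ 0 ∧ x * y = 0} = p - 1 :=
    card_zd p hp
  have key := energy_lineGraph_top
    {x : ZMod (p ^ 2) // x ≠ 0 ∧ ∃ y : ZMod (p ^ 2), y ≠ 0 ∧ x * y = 0}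
    (by rw [hcard]; omega)
  rw [hcard] at key
  have hc : ((p - 1 : ℕ) : ℝ) = (p : ℝ) - 1 := by
    rw [Nat.cast_sub (by omega)]
    norm_num
  rw [hc] at key
  have hring : 2 * ((p : ℝ) - 1) ^ 2 - 6 * ((p : ℝ) - 1) = 2 * (p : ℝ) ^ 2 - 10 * p + 8 := by
    ring
  rw [hring] at key
  convert key using 2
end

section
/- For a prime q > 3, the Wiener index of the line graph of the zero-divisor graph of Z_{3q} equals (q-1)(3q-5). -/
open Polynomial SimpleGraph

namespace WienerZD

variable {q : ℕ}

abbrev Vtx (q : ℕ) := {x : ZMod (3*q) // x ≠ 0 ∧ ∃ y : ZMod (3*q), y ≠ 0 ∧ x * y = 0}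

section

lemma val_ne_zero (hq3 : 3 < q) (x : Vtx q) : (x.1).val ≠ 0 := by
  haveI : NeZero (3*q) := ⟨by omega⟩
  intro h
  exact x.2.1 (by rwa [ZMod.val_eq_zero] at h)

lemma val_lt (hq3 : 3 < q) (x : Vtx q) : (x.1).val < 3*q := by
  haveI : NeZero (3*q) := ⟨by omega⟩
  exact ZMod.val_lt _

lemma mul_eq_zero_iff (hq3 : 3 < q) (x y : ZMod (3*q)) :
    x * y = 0 ↔ 3*q ∣ x.val * y.val := by
  haveI : NeZero (3*q) := ⟨by omega⟩
  conv_lhs => rw [← ZMod.natCast_zmod_val x, ← ZMod.natCast_zmod_val y]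
  rw [← Nat.cast_mul, ZMod.natCast_eq_zero_iff]

lemma not_both (hq : q.Prime) (hq3 : 3 < q) (x : Vtx q) :
    ¬(3 ∣ (x.1).val ∧ q ∣ (x.1).val) := by
  rintro ⟨h3, hqd⟩
  have hcop : Nat.Coprime 3 q :=
    (Nat.coprime_primes (by norm_num) hq).2 (by omega)
  have hdvd : 3*q ∣ (x.1).val := hcop.mul_dvd_of_dvd_of_dvd h3 hqd
  have := Nat.le_of_dvd (Nat.pos_of_ne_zero (val_ne_zero hq3 x)) hdvd
  have := val_lt hq3 x
  omega

lemma vertex_val_cases (hq : q.Prime) (hq3 : 3 < q) (x : Vtx q) :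
    3 ∣ (x.1).val ∨ q ∣ (x.1).val := by
  haveI : NeZero (3*q) := ⟨by omega⟩
  by_contra h
  push_neg at h
  have c3 : Nat.Coprime (x.1).val 3 :=
    ((Nat.Prime.coprime_iff_not_dvd (by norm_num)).2 h.1).symm
  have cq : Nat.Coprime (x.1).val q :=
    ((hq.coprime_iff_not_dvd).2 h.2).symm
  have hcop : Nat.Coprime (x.1).val (3*q) := Nat.Coprime.mul_right c3 cq
  have hu : IsUnit x.1 := by
    have := (ZMod.isUnit_iff_coprime (x.1).val (3*q)).2 hcop
    rwa [ZMod.natCast_zmod_val] at this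
  obtain ⟨_, y, hy0, hxy⟩ := x.2
  exact hy0 (by rwa [hu.mul_right_eq_zero] at hxy)

/-- The vertex `(i+1)*q` (an element of `{q, 2q}`). -/
def wA (hq3 : 3 < q) (i : Fin 2) : Vtx q := by
  haveI : NeZero (3*q) := ⟨by omega⟩
  refine ⟨(((i.1+1)*q : ℕ) : ZMod (3*q)), ?_, ((3:ℕ) : ZMod (3*q)), ?_, ?_⟩
  · intro h0
    rw [ZMod.natCast_eq_zero_iff] at h0
    have hi := i.2
    have hpos : 0 < (i.1+1)*q := Nat.mul_pos (by omega) (by omega)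
    have hle := Nat.le_of_dvd hpos h0
    have : (i.1+1)*q ≤ 2*q := Nat.mul_le_mul_right q (by omega)
    omega
  · intro h0
    rw [ZMod.natCast_eq_zero_iff] at h0
    have := Nat.le_of_dvd (by norm_num) h0
    omega
  · rw [← Nat.cast_mul, ZMod.natCast_eq_zero_iff]
    exact ⟨i.1+1, by ring⟩

/-- The vertex `3*(j+1)` (a nonzero multiple of 3). -/
def wB (hq3 : 3 < q) (j : Fin (q-1)) : Vtx q := by
  haveI : NeZero (3*q) := ⟨by omega⟩
  refine ⟨((3*(j.1+1) : ℕ) : ZMod (3*q)), ?_, ((q:ℕ) : ZMod (3*q)), ?_, ?_⟩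
  · intro h0
    rw [ZMod.natCast_eq_zero_iff] at h0
    have := Nat.le_of_dvd (by positivity) h0
    have := j.2
    omega
  · intro h0
    rw [ZMod.natCast_eq_zero_iff] at h0
    have := Nat.le_of_dvd (by omega) h0
    omega
  · rw [← Nat.cast_mul, ZMod.natCast_eq_zero_iff]
    exact ⟨j.1+1, by ring⟩

lemma wA_val (hq3 : 3 < q) (i : Fin 2) : ((wA hq3 i).1).val = (i.1+1)*q := by
  haveI : NeZero (3*q) := ⟨by omega⟩
  have hi := i.2
  have hlt : (i.1+1)*q < 3*q := by
    calc (i.1+1)*q ≤ 2*q := Nat.mul_le_mul_right q (by omega)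
    _ < 3*q := by omega
  exact ZMod.val_cast_of_lt hlt

lemma wB_val (hq3 : 3 < q) (j : Fin (q-1)) : ((wB hq3 j).1).val = 3*(j.1+1) := by
  haveI : NeZero (3*q) := ⟨by omega⟩
  have hj := j.2
  have hlt : 3*(j.1+1) < 3*q := by omega
  exact ZMod.val_cast_of_lt hlt

lemma wA_ne_wB (hq : q.Prime) (hq3 : 3 < q) (i : Fin 2) (j : Fin (q-1)) :
    wA hq3 i ≠ wB hq3 j := by
  intro h
  have hv : ((wA hq3 i).1).val = ((wB hq3 j).1).val := by rw [h]
  rw [wA_val, wB_val] at hv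
  have hdvd : q ∣ 3*(j.1+1) := ⟨i.1+1, by rw [← hv]; ring⟩
  rcases (Nat.Prime.dvd_mul hq).1 hdvd with h' | h'
  · have := Nat.le_of_dvd (by norm_num) h'; omega
  · have := Nat.le_of_dvd (by omega) h'
    have := j.2
    omega

lemma wA_inj (hq3 : 3 < q) {i i' : Fin 2} (h : wA hq3 i = wA hq3 i') : i = i' := by
  have hv : ((wA hq3 i).1).val = ((wA hq3 i').1).val := by rw [h]
  rw [wA_val, wA_val] at hv
  have : i.1 = i'.1 := by
    have := Nat.eq_of_mul_eq_mul_right (by omega : 0 < q) hv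
    omega
  exact Fin.ext this

lemma wB_inj (hq3 : 3 < q) {j j' : Fin (q-1)} (h : wB hq3 j = wB hq3 j') : j = j' := by
  have hv : ((wB hq3 j).1).val = ((wB hq3 j').1).val := by rw [h]
  rw [wB_val, wB_val] at hv
  exact Fin.ext (by omega)

lemma adj_wA_wB (hq : q.Prime) (hq3 : 3 < q) (i : Fin 2) (j : Fin (q-1)) :
    (zdGraph (3*q)).Adj (wA hq3 i) (wB hq3 j) := by
  refine ⟨wA_ne_wB hq hq3 i j, ?_⟩
  rw [mul_eq_zero_iff hq3, wA_val, wB_val]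
  exact ⟨(i.1+1)*(j.1+1), by ring⟩

/-- The canonical bijection from index pairs to edges. -/
def g (hq : q.Prime) (hq3 : 3 < q) (p : Fin 2 × Fin (q-1)) : (zdGraph (3*q)).edgeSet :=
  ⟨s(wA hq3 p.1, wB hq3 p.2), (zdGraph (3*q)).mem_edgeSet.mpr (adj_wA_wB hq hq3 p.1 p.2)⟩

lemma g_inj (hq : q.Prime) (hq3 : 3 < q) : Function.Injective (g hq hq3) := by
  rintro ⟨i, j⟩ ⟨i', j'⟩ h
  have h' : s(wA hq3 i, wB hq3 j) = s(wA hq3 i', wB hq3 j') := congrArg Subtype.val h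
  rw [Sym2.eq_iff] at h'
  rcases h' with ⟨h1, h2⟩ | ⟨h1, h2⟩
  · obtain rfl := wA_inj hq3 h1
    obtain rfl := wB_inj hq3 h2
    rfl
  · exact absurd h1 (wA_ne_wB hq hq3 i j')

lemma q_case (hq : q.Prime) (hq3 : 3 < q) (x : Vtx q) (h : q ∣ (x.1).val) :
    ∃ i : Fin 2, x = wA hq3 i := by
  haveI : NeZero (3*q) := ⟨by omega⟩
  obtain ⟨k, hk⟩ := h
  have hlt := val_lt hq3 x
  have hne := val_ne_zero hq3 x
  have hk3 : k < 3 := by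
    by_contra hk3
    push_neg at hk3
    nlinarith [hk ▸ hlt]
  have hk0 : k ≠ 0 := by rintro rfl; rw [mul_zero] at hk; exact hne hk
  refine ⟨⟨k-1, by omega⟩, ?_⟩
  apply Subtype.ext
  have hx : (x.1) = (((x.1).val : ℕ) : ZMod (3*q)) := (ZMod.natCast_zmod_val _).symm
  conv_lhs => rw [hx, hk]
  show ((q*k : ℕ) : ZMod (3*q)) = (((k-1+1)*q : ℕ) : ZMod (3*q))
  congr 1
  have : k - 1 + 1 = k := by omega
  rw [this, mul_comm]

lemma three_case (hq : q.Prime) (hq3 : 3 < q) (x : Vtx q) (h : 3 ∣ (x.1).val) :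
    ∃ j : Fin (q-1), x = wB hq3 j := by
  haveI : NeZero (3*q) := ⟨by omega⟩
  obtain ⟨t, ht⟩ := h
  have hlt := val_lt hq3 x
  have hne := val_ne_zero hq3 x
  have ht0 : t ≠ 0 := by rintro rfl; rw [mul_zero] at ht; exact hne ht
  have htq : t < q := by omega
  refine ⟨⟨t-1, by omega⟩, ?_⟩
  apply Subtype.ext
  have hx : (x.1) = (((x.1).val : ℕ) : ZMod (3*q)) := (ZMod.natCast_zmod_val _).symm
  conv_lhs => rw [hx, ht]
  show ((3*t : ℕ) : ZMod (3*q)) = ((3*(t-1+1) : ℕ) : ZMod (3*q))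
  congr 1
  omega

lemma adj_cases (hq : q.Prime) (hq3 : 3 < q) {a b : Vtx q}
    (h : (zdGraph (3*q)).Adj a b) :
    (q ∣ (a.1).val ∧ 3 ∣ (b.1).val) ∨ (3 ∣ (a.1).val ∧ q ∣ (b.1).val) := by
  have hdvd : 3*q ∣ (a.1).val * (b.1).val := (mul_eq_zero_iff hq3 _ _).1 h.2
  have h3 : (3:ℕ).Prime := by norm_num
  have hq3ne : q ≠ 3 := by omega
  rcases vertex_val_cases hq hq3 a with ha3 | haq
  · rcases vertex_val_cases hq hq3 b with hb3 | hbq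
    · -- both multiples of 3 : contradiction
      exfalso
      obtain ⟨s, hs⟩ := ha3
      obtain ⟨t, htt⟩ := hb3
      have hmul : 3*q ∣ 3*(s*(3*t)) := by
        rw [show 3*(s*(3*t)) = (3*s)*(3*t) by ring, ← hs, ← htt]; exact hdvd
      have hq' : q ∣ s*(3*t) :=
        (mul_dvd_mul_iff_left (by norm_num : (3:ℕ) ≠ 0)).1 hmul
      rcases (hq.dvd_mul).1 hq' with h' | h'
      · exact not_both hq hq3 a ⟨⟨s, hs⟩, hs ▸ Dvd.dvd.mul_left h' 3⟩
      · rcases (hq.dvd_mul).1 h' with h'' | h''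
        · have := Nat.le_of_dvd (by norm_num) h''; omega
        · exact not_both hq hq3 b ⟨⟨t, htt⟩, htt ▸ Dvd.dvd.mul_left h'' 3⟩
    · exact Or.inr ⟨ha3, hbq⟩
  · rcases vertex_val_cases hq hq3 b with hb3 | hbq
    · exact Or.inl ⟨haq, hb3⟩
    · -- both multiples of q : contradiction
      exfalso
      obtain ⟨s, hs⟩ := haq
      obtain ⟨t, htt⟩ := hbq
      have hmul : q*3 ∣ q*(s*(q*t)) := by
        rw [show q*(s*(q*t)) = (q*s)*(q*t) by ring, ← hs, ← htt]
        rw [mul_comm q 3]; exact hdvd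
      have h3' : (3:ℕ) ∣ s*(q*t) :=
        (mul_dvd_mul_iff_left (by omega : q ≠ 0)).1 hmul
      rcases (h3.dvd_mul).1 h3' with h' | h'
      · exact not_both hq hq3 a ⟨hs ▸ Dvd.dvd.mul_left h' q, ⟨s, hs⟩⟩
      · rcases (h3.dvd_mul).1 h' with h'' | h''
        · rcases (hq.eq_one_or_self_of_dvd 3 h'') with h4 | h4 <;> omega
        · exact not_both hq hq3 b ⟨htt ▸ Dvd.dvd.mul_left h'' q, ⟨t, htt⟩⟩

lemma g_surj (hq : q.Prime) (hq3 : 3 < q) : Function.Surjective (g hq hq3) := by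
  rintro ⟨e, he⟩
  revert he
  induction e using Sym2.ind with
  | _ a b =>
    intro he
    have hadj : (zdGraph (3*q)).Adj a b := (zdGraph (3*q)).mem_edgeSet.mp he
    rcases adj_cases hq hq3 hadj with ⟨haq, hb3⟩ | ⟨ha3, hbq⟩
    · obtain ⟨i, rfl⟩ := q_case hq hq3 a haq
      obtain ⟨j, rfl⟩ := three_case hq hq3 b hb3
      exact ⟨(i, j), rfl⟩
    · obtain ⟨j, rfl⟩ := three_case hq hq3 a ha3
      obtain ⟨i, rfl⟩ := q_case hq hq3 b hbq
      exact ⟨(i, j), Subtype.ext (Sym2.eq_swap)⟩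

lemma lineAdj (hq : q.Prime) (hq3 : 3 < q) (p p' : Fin 2 × Fin (q-1)) :
    ((zdGraph (3*q)).lineGraph).Adj (g hq hq3 p) (g hq hq3 p') ↔
      p ≠ p' ∧ (p.1 = p'.1 ∨ p.2 = p'.2) := by
  rw [lineGraph_adj_iff_exists]
  constructor
  · rintro ⟨hne, v, hv1, hv2⟩
    refine ⟨fun h => hne (by rw [h]), ?_⟩
    simp only [g, Sym2.mem_iff] at hv1 hv2
    rcases hv1 with rfl | rfl
    · rcases hv2 with h | h
      · exact Or.inl (wA_inj hq3 h)
      · exact absurd h (wA_ne_wB hq hq3 _ _)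
    · rcases hv2 with h | h
      · exact absurd h.symm (wA_ne_wB hq hq3 _ _)
      · exact Or.inr (wB_inj hq3 h)
  · rintro ⟨hne, h | h⟩
    · refine ⟨fun hg => hne (g_inj hq hq3 hg), wA hq3 p.1, ?_, ?_⟩
      · simp [g]
      · simp [g, h]
    · refine ⟨fun hg => hne (g_inj hq hq3 hg), wB hq3 p.2, ?_, ?_⟩
      · simp [g]
      · simp [g, h]

lemma lineDist (hq : q.Prime) (hq3 : 3 < q) (p p' : Fin 2 × Fin (q-1)) :
    ((zdGraph (3*q)).lineGraph).dist (g hq hq3 p) (g hq hq3 p') =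
      (if p.1 = p'.1 then 0 else 1) + (if p.2 = p'.2 then 0 else 1) := by
  by_cases h1 : p.1 = p'.1 <;> by_cases h2 : p.2 = p'.2
  · have : p = p' := Prod.ext h1 h2
    subst this
    simp [SimpleGraph.dist_self]
  · have hne : p ≠ p' := fun h => h2 (by rw [h])
    rw [SimpleGraph.dist_eq_one_iff_adj.2 ((lineAdj hq hq3 p p').2 ⟨hne, Or.inl h1⟩)]
    simp [h1, h2]
  · have hne : p ≠ p' := fun h => h1 (by rw [h])
    rw [SimpleGraph.dist_eq_one_iff_adj.2 ((lineAdj hq hq3 p p').2 ⟨hne, Or.inr h2⟩)]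
    simp [h1, h2]
  · -- distance 2
    have ha : ((zdGraph (3*q)).lineGraph).Adj (g hq hq3 p) (g hq hq3 (p.1, p'.2)) :=
      (lineAdj hq hq3 p (p.1, p'.2)).2 ⟨fun h => h2 (by rw [h]), Or.inl rfl⟩
    have hb : ((zdGraph (3*q)).lineGraph).Adj (g hq hq3 (p.1, p'.2)) (g hq hq3 p') :=
      (lineAdj hq hq3 (p.1, p'.2) p').2 ⟨fun h => h1 (by rw [← h]), Or.inr rfl⟩
    have hle : ((zdGraph (3*q)).lineGraph).dist (g hq hq3 p) (g hq hq3 p') ≤ 2 := by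
      have h := SimpleGraph.dist_le (Walk.cons ha (Walk.cons hb Walk.nil))
      simpa using h
    have hne : p ≠ p' := fun h => h1 (by rw [h])
    have h0 : ((zdGraph (3*q)).lineGraph).dist (g hq hq3 p) (g hq hq3 p') ≠ 0 :=
      SimpleGraph.dist_ne_zero_iff_ne_and_reachable.2
        ⟨fun h => hne (g_inj hq hq3 h), ⟨Walk.cons ha (Walk.cons hb Walk.nil)⟩⟩
    have hone : ((zdGraph (3*q)).lineGraph).dist (g hq hq3 p) (g hq hq3 p') ≠ 1 := by
      intro h
      have := SimpleGraph.dist_eq_one_iff_adj.1 h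
      rcases ((lineAdj hq hq3 p p').1 this).2 with h' | h'
      · exact h1 h'
      · exact h2 h'
    rw [if_neg h1, if_neg h2]
    omega

end

lemma row_sum (N : ℕ) (j : Fin N) :
    ∑ j' : Fin N, (if j = j' then (0:ℕ) else 1) = N - 1 := by
  have h2 : ∑ j' : Fin N, (if j = j' then (1:ℕ) else 0) = 1 := by simp
  have hsum : ∑ j' : Fin N, ((if j = j' then (0:ℕ) else 1) + (if j = j' then (1:ℕ) else 0))
      = ∑ _j' : Fin N, (1:ℕ) :=
    Finset.sum_congr rfl (fun j' _ => by by_cases h : j = j' <;> simp [h])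
  rw [Finset.sum_add_distrib, h2, Finset.sum_const] at hsum
  simp only [Finset.card_univ, Fintype.card_fin, smul_eq_mul, mul_one] at hsum
  omega

lemma total_sum (m : ℕ) (hm : m ≠ 0) :
    ∑ pp : (Fin 2 × Fin m) × (Fin 2 × Fin m),
      ((if pp.1.1 = pp.2.1 then (0:ℕ) else 1) + (if pp.1.2 = pp.2.2 then (0:ℕ) else 1))
      = 2*(m*(3*m-2)) := by
  obtain ⟨k, rfl⟩ := Nat.exists_eq_succ_of_ne_zero hm
  simp only [Fintype.sum_prod_type]
  have step : ∀ (i i' : Fin 2) (j : Fin (k+1)),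
      ∑ j' : Fin (k+1), ((if i = i' then (0:ℕ) else 1) + (if j = j' then (0:ℕ) else 1))
        = (k+1) * (if i = i' then (0:ℕ) else 1) + k := by
    intro i i' j
    rw [Finset.sum_add_distrib, row_sum, Finset.sum_const]
    simp [mul_comm]
  simp only [step]
  have step2 : ∀ (i : Fin 2),
      ∑ i' : Fin 2, ((k+1) * (if i = i' then (0:ℕ) else 1) + k)
        = (k+1) * 1 + 2*k := by
    intro i
    rw [Finset.sum_add_distrib, ← Finset.mul_sum, row_sum, Finset.sum_const]
    simp [mul_comm]
  simp only [step2]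
  simp only [Finset.sum_const, Finset.card_univ, Fintype.card_fin, smul_eq_mul]
  have h5 : 3*(k+1)-2 = (k+1)*1 + 2*k := by omega
  rw [h5]

end WienerZD

theorem wiener_lineGraph_zdGraph_three_mul_prime
    (q : ℕ) (hq : q.Prime) (hq3 : 3 < q) :
    wienerIndex (zdGraph (3 * q)).lineGraph = (q - 1) * (3 * q - 5) := by
  haveI : NeZero (3*q) := ⟨by omega⟩
  haveI : Fintype ((zdGraph (3*q)).edgeSet) := Fintype.ofFinite _
  have hbij : Function.Bijective (WienerZD.g hq hq3) :=
    ⟨WienerZD.g_inj hq hq3, WienerZD.g_surj hq hq3⟩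
  unfold wienerIndex
  rw [finsum_eq_sum_of_fintype]
  have hsum := Fintype.sum_bijective
    (Prod.map (WienerZD.g hq hq3) (WienerZD.g hq hq3)) (hbij.prodMap hbij)
    (fun x : (Fin 2 × Fin (q-1)) × (Fin 2 × Fin (q-1)) =>
      ((zdGraph (3*q)).lineGraph).dist (WienerZD.g hq hq3 x.1) (WienerZD.g hq hq3 x.2))
    (fun p => ((zdGraph (3*q)).lineGraph).dist p.1 p.2)
    (fun x => rfl)
  rw [← hsum]
  simp only [WienerZD.lineDist hq hq3]
  rw [WienerZD.total_sum (q-1) (by omega)]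
  rw [Nat.mul_div_cancel_left _ (by norm_num : 0 < 2)]
  congr 1
  omega
end

section
/- For distinct primes p, q with 2 < p < q, the Wiener index of the line graph of the zero-divisor graph of Z_{pq} equals (1/2)(p-1)(q-1)(2pq - 3p - 3q + 4). -/
open Polynomial SimpleGraph

/-! ### Auxiliary general lemmas -/

open Finset in
/-- In a graph of diameter at most 2 (expressed via common neighbors), the sum of all
pairwise distances is `2(N² - N) - A` where `A` is the number of ordered adjacent pairs. -/
lemma sum_dist_eq_of_diam_le_two {V : Type*} [Fintype V] (G : SimpleGraph V)
    (h : ∀ x y : V, x ≠ y → ¬ G.Adj x y → ∃ z, G.Adj x z ∧ G.Adj z y) :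
    ∑ᶠ z : V × V, G.dist z.1 z.2 =
      2 * (Nat.card V * Nat.card V - Nat.card V) - Nat.card {z : V × V // G.Adj z.1 z.2} := by
  classical
  have key : ∀ x y : V, G.dist x y + (if G.Adj x y then 1 else 0)
      = if x = y then 0 else 2 := by
    intro x y
    by_cases hxy : x = y
    · subst hxy
      simp [SimpleGraph.dist_self]
    · by_cases ha : G.Adj x y
      · rw [if_pos ha, if_neg hxy, SimpleGraph.dist_eq_one_iff_adj.mpr ha]
      · obtain ⟨z, h1, h2⟩ := h x y hxy ha
        have hle : G.dist x y ≤ 2 := by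
          have := SimpleGraph.dist_le (h1.toWalk.append h2.toWalk)
          simpa using this
        have h0 : G.dist x y ≠ 0 := by
          rw [Ne, SimpleGraph.dist_eq_zero_iff_eq_or_not_reachable]
          push_neg
          exact ⟨hxy, ⟨h1.toWalk.append h2.toWalk⟩⟩
        have h1' : G.dist x y ≠ 1 := fun hc => ha (SimpleGraph.dist_eq_one_iff_adj.mp hc)
        rw [if_neg ha, if_neg hxy]
        omega
  rw [finsum_eq_sum_of_fintype, Nat.card_eq_fintype_card, Nat.card_eq_fintype_card,
    Fintype.card_subtype]
  have hsum : (∑ z : V × V, G.dist z.1 z.2)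
      + (univ.filter fun z : V × V => G.Adj z.1 z.2).card
      = 2 * (Fintype.card V * Fintype.card V - Fintype.card V) := by
    rw [card_filter, ← Finset.sum_add_distrib]
    calc ∑ z : V × V, (G.dist z.1 z.2 + if G.Adj z.1 z.2 then 1 else 0)
        = ∑ z : V × V, (if z.1 = z.2 then 0 else 2) :=
          Finset.sum_congr rfl fun z _ => key z.1 z.2
      _ = 2 * (univ.filter fun z : V × V => ¬ z.1 = z.2).card := by
          rw [Finset.sum_ite, Finset.sum_const, Finset.sum_const]
          simp [mul_comm]
      _ = 2 * (Fintype.card V * Fintype.card V - Fintype.card V) := by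
          congr 1
          have heq : (univ.filter fun z : V × V => ¬ z.1 = z.2)
              = (univ : Finset V).offDiag := by
            ext z
            simp [Finset.mem_offDiag]
          rw [heq, Finset.offDiag_card, Finset.card_univ]
  omega

open Finset in
/-- The number of ordered adjacent pairs in the rook's graph on `α × β`. -/
lemma rook_pairs_card {α β : Type*} [Fintype α] [Fintype β] [DecidableEq α] [DecidableEq β] :
    (Finset.univ.filter fun w : (α × β) × (α × β) =>
        ¬ w.1 = w.2 ∧ (w.1.1 = w.2.1 ∨ w.1.2 = w.2.2)).card
      = (Fintype.card α * Fintype.card β) * (Fintype.card α + Fintype.card β - 2) := by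
  classical
  have hper : ∀ t : α × β,
      (Finset.univ.filter fun t' : α × β => ¬ t = t' ∧ (t.1 = t'.1 ∨ t.2 = t'.2)).card
        = Fintype.card α + Fintype.card β - 2 := by
    intro t
    have hset : (Finset.univ.filter fun t' : α × β => ¬ t = t' ∧ (t.1 = t'.1 ∨ t.2 = t'.2))
        = (((({t.1} : Finset α) ×ˢ (univ : Finset β)) ∪
            ((univ : Finset α) ×ˢ ({t.2} : Finset β))).erase t) := by
      ext w
      simp only [Finset.mem_filter, Finset.mem_univ, true_and, Finset.mem_erase,
        Finset.mem_union, Finset.mem_product, Finset.mem_singleton, and_true]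
      constructor
      · rintro ⟨h1, h2⟩
        refine ⟨fun hw => h1 hw.symm, ?_⟩
        rcases h2 with h | h
        · exact Or.inl h.symm
        · exact Or.inr h.symm
      · rintro ⟨h1, h2⟩
        refine ⟨fun hw => h1 hw.symm, ?_⟩
        rcases h2 with h | h
        · exact Or.inl h.symm
        · exact Or.inr h.symm
    rw [hset]
    have hmem : t ∈ (({t.1} : Finset α) ×ˢ (univ : Finset β)) ∪
        ((univ : Finset α) ×ˢ ({t.2} : Finset β)) := by
      simp
    rw [Finset.card_erase_of_mem hmem]
    have hint : ((({t.1} : Finset α) ×ˢ (univ : Finset β)) ∩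
        ((univ : Finset α) ×ˢ ({t.2} : Finset β))) = {t} := by
      ext w
      simp only [Finset.mem_inter, Finset.mem_product, Finset.mem_singleton, Finset.mem_univ,
        true_and, and_true]
      constructor
      · rintro ⟨h1, h2⟩
        exact Prod.ext h1 h2
      · rintro rfl
        exact ⟨rfl, rfl⟩
    have hcu := Finset.card_union_add_card_inter
      ((({t.1} : Finset α) ×ˢ (univ : Finset β)))
      (((univ : Finset α) ×ˢ ({t.2} : Finset β)))
    rw [hint] at hcu
    simp only [Finset.card_product, Finset.card_singleton, Finset.card_univ, one_mul,
      mul_one] at hcu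
    omega
  rw [Finset.card_filter, Fintype.sum_prod_type]
  have hinner : ∀ t : α × β,
      (∑ t' : α × β, if ¬ t = t' ∧ (t.1 = t'.1 ∨ t.2 = t'.2) then 1 else 0)
        = Fintype.card α + Fintype.card β - 2 := by
    intro t
    rw [← Finset.card_filter]
    exact hper t
  calc (∑ t : α × β, ∑ t' : α × β, if ¬ t = t' ∧ (t.1 = t'.1 ∨ t.2 = t'.2) then 1 else 0)
      = ∑ _t : α × β, (Fintype.card α + Fintype.card β - 2) :=
        Finset.sum_congr rfl fun t _ => hinner t
    _ = (Fintype.card α * Fintype.card β) * (Fintype.card α + Fintype.card β - 2) := by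
        rw [Finset.sum_const, Finset.card_univ, Fintype.card_prod, smul_eq_mul]

/-! ### Structure of the zero-divisor graph of `ZMod (p*q)` -/

section ZD

variable {p q : ℕ} [Fact p.Prime] [Fact q.Prime] (φ : ZMod (p*q) ≃+* ZMod p × ZMod q)

/-- The vertex type of the zero-divisor graph of `ZMod (p*q)`. -/
abbrev ZDVtx (p q : ℕ) : Type :=
  {x : ZMod (p*q) // x ≠ 0 ∧ ∃ y : ZMod (p*q), y ≠ 0 ∧ x * y = 0}

/-- The index type for edges: pairs of nonzero residues. -/
abbrev ZDIdx (p q : ℕ) : Type :=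
  {u : ZMod p // u ≠ 0} × {v : ZMod q // v ≠ 0}

lemma mem_zdv_iff (x : ZMod (p*q)) :
    (x ≠ 0 ∧ ∃ y : ZMod (p*q), y ≠ 0 ∧ x * y = 0) ↔
      ((φ x).1 = 0 ∧ (φ x).2 ≠ 0) ∨ ((φ x).1 ≠ 0 ∧ (φ x).2 = 0) := by
  constructor
  · rintro ⟨hx0, y, hy0, hxy⟩
    have hx' : φ x ≠ 0 := fun h => hx0 (φ.injective (h.trans (map_zero φ).symm))
    have hy' : φ y ≠ 0 := fun h => hy0 (φ.injective (h.trans (map_zero φ).symm))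
    have hm : φ x * φ y = 0 := by rw [← map_mul, hxy, map_zero]
    have h1 : (φ x).1 * (φ y).1 = 0 := by rw [← Prod.fst_mul, hm]; rfl
    have h2 : (φ x).2 * (φ y).2 = 0 := by rw [← Prod.snd_mul, hm]; rfl
    rcases mul_eq_zero.mp h1 with ha | ha <;> rcases mul_eq_zero.mp h2 with hb | hb
    · exact absurd (Prod.ext ha hb) hx'
    · refine Or.inl ⟨ha, fun hc => hx' (Prod.ext ha hc)⟩
    · refine Or.inr ⟨fun hc => hx' (Prod.ext hc hb), hb⟩
    · exact absurd (Prod.ext ha hb) hy'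
  · rintro (⟨h1, h2⟩ | ⟨h1, h2⟩)
    · refine ⟨fun h => h2 (by rw [h, map_zero]; rfl), φ.symm (1, 0), ?_, ?_⟩
      · intro h
        have h' := congrArg φ h
        rw [RingEquiv.apply_symm_apply, map_zero] at h'
        exact one_ne_zero (congrArg Prod.fst h')
      · apply φ.injective
        rw [map_mul, RingEquiv.apply_symm_apply, map_zero]
        apply Prod.ext
        · rw [Prod.fst_mul, h1]; simp
        · rw [Prod.snd_mul]; simp
    · refine ⟨fun h => h1 (by rw [h, map_zero]; rfl), φ.symm (0, 1), ?_, ?_⟩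
      · intro h
        have h' := congrArg φ h
        rw [RingEquiv.apply_symm_apply, map_zero] at h'
        exact one_ne_zero (congrArg Prod.snd h')
      · apply φ.injective
        rw [map_mul, RingEquiv.apply_symm_apply, map_zero]
        apply Prod.ext
        · rw [Prod.fst_mul]; simp
        · rw [Prod.snd_mul, h2]; simp

lemma zd_side1 (a : ZDVtx p q) (h : (φ a.1).1 = 0) : (φ a.1).2 ≠ 0 := by
  rcases (mem_zdv_iff φ a.1).mp a.2 with ⟨_, h2⟩ | ⟨h1, _⟩
  · exact h2
  · exact absurd h h1

lemma zd_side2 (a : ZDVtx p q) (h : (φ a.1).2 = 0) : (φ a.1).1 ≠ 0 := by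
  rcases (mem_zdv_iff φ a.1).mp a.2 with ⟨_, h2⟩ | ⟨h1, _⟩
  · exact absurd h h2
  · exact h1

lemma zd_adj_iff (a b : ZDVtx p q) :
    (zdGraph (p*q)).Adj a b ↔
      (((φ a.1).1 = 0 ∧ (φ b.1).2 = 0) ∨ ((φ a.1).2 = 0 ∧ (φ b.1).1 = 0)) := by
  constructor
  · rintro ⟨hne, hab⟩
    have hm : φ a.1 * φ b.1 = 0 := by rw [← map_mul, hab, map_zero]
    have h1 : (φ a.1).1 * (φ b.1).1 = 0 := by rw [← Prod.fst_mul, hm]; rfl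
    have h2 : (φ a.1).2 * (φ b.1).2 = 0 := by rw [← Prod.snd_mul, hm]; rfl
    rcases (mem_zdv_iff φ a.1).mp a.2 with ⟨ha1, ha2⟩ | ⟨ha1, ha2⟩ <;>
      rcases (mem_zdv_iff φ b.1).mp b.2 with ⟨hb1, hb2⟩ | ⟨hb1, hb2⟩
    · exact absurd h2 (mul_ne_zero ha2 hb2)
    · exact Or.inl ⟨ha1, hb2⟩
    · exact Or.inr ⟨ha2, hb1⟩
    · exact absurd h1 (mul_ne_zero ha1 hb1)
  · rintro (⟨h1, h2⟩ | ⟨h1, h2⟩)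
    · have ha2 : (φ a.1).2 ≠ 0 := zd_side1 φ a h1
      have hb1 : (φ b.1).1 ≠ 0 := zd_side2 φ b h2
      refine ⟨?_, ?_⟩
      · intro h
        rw [h] at h1
        exact hb1 h1
      · have hm : φ (a.1 * b.1) = 0 := by
          rw [map_mul]
          apply Prod.ext
          · rw [Prod.fst_mul, h1, zero_mul]; rfl
          · rw [Prod.snd_mul, h2, mul_zero]; rfl
        exact φ.injective (hm.trans (map_zero φ).symm)
    · have ha1 : (φ a.1).1 ≠ 0 := zd_side2 φ a h1
      have hb2 : (φ b.1).2 ≠ 0 := zd_side1 φ b h2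
      refine ⟨?_, ?_⟩
      · intro h
        rw [h] at h1
        exact hb2 h1
      · have hm : φ (a.1 * b.1) = 0 := by
          rw [map_mul]
          apply Prod.ext
          · rw [Prod.fst_mul, h2, mul_zero]; rfl
          · rw [Prod.snd_mul, h1, zero_mul]; rfl
        exact φ.injective (hm.trans (map_zero φ).symm)

/-- The vertex of the zero-divisor graph corresponding to `(u, 0)`. -/
def ZDq (u : {u : ZMod p // u ≠ 0}) : ZDVtx p q :=
  ⟨φ.symm (u.1, 0), by
    rw [mem_zdv_iff φ, RingEquiv.apply_symm_apply]
    exact Or.inr ⟨u.2, rfl⟩⟩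

/-- The vertex of the zero-divisor graph corresponding to `(0, v)`. -/
def ZDp (v : {v : ZMod q // v ≠ 0}) : ZDVtx p q :=
  ⟨φ.symm (0, v.1), by
    rw [mem_zdv_iff φ, RingEquiv.apply_symm_apply]
    exact Or.inl ⟨rfl, v.2⟩⟩

@[simp] lemma φ_ZDq (u : {u : ZMod p // u ≠ 0}) : φ (ZDq φ u).1 = (u.1, 0) :=
  RingEquiv.apply_symm_apply _ _

@[simp] lemma φ_ZDp (v : {v : ZMod q // v ≠ 0}) : φ (ZDp φ v).1 = (0, v.1) :=
  RingEquiv.apply_symm_apply _ _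

lemma ZDq_inj {u u' : {u : ZMod p // u ≠ 0}} (h : ZDq φ u = ZDq φ u') : u = u' := by
  have h1 : φ (ZDq φ u).1 = φ (ZDq φ u').1 := by rw [h]
  rw [φ_ZDq, φ_ZDq] at h1
  exact Subtype.ext (congrArg Prod.fst h1)

lemma ZDp_inj {v v' : {v : ZMod q // v ≠ 0}} (h : ZDp φ v = ZDp φ v') : v = v' := by
  have h1 : φ (ZDp φ v).1 = φ (ZDp φ v').1 := by rw [h]
  rw [φ_ZDp, φ_ZDp] at h1
  exact Subtype.ext (congrArg Prod.snd h1)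

lemma ZDq_ne_ZDp (u : {u : ZMod p // u ≠ 0}) (v : {v : ZMod q // v ≠ 0}) :
    ZDq φ u ≠ ZDp φ v := by
  intro h
  have h1 : φ (ZDq φ u).1 = φ (ZDp φ v).1 := by rw [h]
  rw [φ_ZDq, φ_ZDp] at h1
  exact u.2 (congrArg Prod.fst h1)

lemma adj_ZDq_ZDp (u : {u : ZMod p // u ≠ 0}) (v : {v : ZMod q // v ≠ 0}) :
    (zdGraph (p*q)).Adj (ZDq φ u) (ZDp φ v) := by
  rw [zd_adj_iff φ]
  exact Or.inr ⟨by rw [φ_ZDq], by rw [φ_ZDp]⟩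

/-- The parametrization of the edges of the zero-divisor graph of `ZMod (p*q)`. -/
def ZDPhi (t : ZDIdx p q) : (zdGraph (p*q)).edgeSet :=
  ⟨s(ZDq φ t.1, ZDp φ t.2), (SimpleGraph.mem_edgeSet _).mpr (adj_ZDq_ZDp φ t.1 t.2)⟩

lemma ZDPhi_injective : Function.Injective (ZDPhi φ) := by
  intro t t' h
  have h' : s(ZDq φ t.1, ZDp φ t.2) = s(ZDq φ t'.1, ZDp φ t'.2) := Subtype.ext_iff.mp h
  rcases Sym2.eq_iff.mp h' with ⟨h1, h2⟩ | ⟨h1, h2⟩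
  · exact Prod.ext (Subtype.ext_iff.mpr (congrArg Subtype.val (ZDq_inj φ h1)))
      (Subtype.ext_iff.mpr (congrArg Subtype.val (ZDp_inj φ h2)))
  · exact absurd h1 (ZDq_ne_ZDp φ _ _)

lemma ZDPhi_surjective : Function.Surjective (ZDPhi φ) := by
  rintro ⟨z, hz⟩
  induction z using Sym2.ind with
  | _ a b =>
    have hadj : (zdGraph (p*q)).Adj a b := (SimpleGraph.mem_edgeSet _).mp hz
    rw [zd_adj_iff φ] at hadj
    rcases hadj with ⟨h1, h2⟩ | ⟨h1, h2⟩
    · -- a is of ZDp-type, b of ZDq-type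
      have ha2 : (φ a.1).2 ≠ 0 := zd_side1 φ a h1
      have hb1 : (φ b.1).1 ≠ 0 := zd_side2 φ b h2
      refine ⟨(⟨(φ b.1).1, hb1⟩, ⟨(φ a.1).2, ha2⟩), Subtype.ext ?_⟩
      show s(ZDq φ _, ZDp φ _) = s(a, b)
      have hXb : ZDq φ ⟨(φ b.1).1, hb1⟩ = b := by
        apply Subtype.ext
        show φ.symm ((φ b.1).1, 0) = b.1
        conv_rhs => rw [← φ.symm_apply_apply b.1]
        congr 1
        exact Prod.ext rfl h2.symm
      have hXa : ZDp φ ⟨(φ a.1).2, ha2⟩ = a := by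
        apply Subtype.ext
        show φ.symm (0, (φ a.1).2) = a.1
        conv_rhs => rw [← φ.symm_apply_apply a.1]
        congr 1
        exact Prod.ext h1.symm rfl
      rw [hXb, hXa, Sym2.eq_swap]
    · -- a is of ZDq-type, b of ZDp-type
      have ha1 : (φ a.1).1 ≠ 0 := zd_side2 φ a h1
      have hb2 : (φ b.1).2 ≠ 0 := zd_side1 φ b h2
      refine ⟨(⟨(φ a.1).1, ha1⟩, ⟨(φ b.1).2, hb2⟩), Subtype.ext ?_⟩
      show s(ZDq φ _, ZDp φ _) = s(a, b)
      have hXa : ZDq φ ⟨(φ a.1).1, ha1⟩ = a := by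
        apply Subtype.ext
        show φ.symm ((φ a.1).1, 0) = a.1
        conv_rhs => rw [← φ.symm_apply_apply a.1]
        congr 1
        exact Prod.ext rfl h1.symm
      have hXb : ZDp φ ⟨(φ b.1).2, hb2⟩ = b := by
        apply Subtype.ext
        show φ.symm (0, (φ b.1).2) = b.1
        conv_rhs => rw [← φ.symm_apply_apply b.1]
        congr 1
        exact Prod.ext h2.symm rfl
      rw [hXa, hXb]

lemma ZDPhi_lineAdj_iff (t t' : ZDIdx p q) :
    (zdGraph (p*q)).lineGraph.Adj (ZDPhi φ t) (ZDPhi φ t') ↔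
      ¬ t = t' ∧ (t.1 = t'.1 ∨ t.2 = t'.2) := by
  rw [SimpleGraph.lineGraph_adj_iff_exists]
  constructor
  · rintro ⟨hne, v, hv1, hv2⟩
    have hv1' : v = ZDq φ t.1 ∨ v = ZDp φ t.2 := Sym2.mem_iff.mp hv1
    have hv2' : v = ZDq φ t'.1 ∨ v = ZDp φ t'.2 := Sym2.mem_iff.mp hv2
    refine ⟨fun h => hne (by rw [h]), ?_⟩
    rcases hv1' with h1 | h1 <;> rcases hv2' with h2 | h2
    · exact Or.inl (Subtype.ext_iff.mpr (congrArg Subtype.val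
        (ZDq_inj φ (h1.symm.trans h2))))
    · exact absurd (h1.symm.trans h2) (ZDq_ne_ZDp φ _ _)
    · exact absurd (h2.symm.trans h1) (ZDq_ne_ZDp φ _ _)
    · exact Or.inr (Subtype.ext_iff.mpr (congrArg Subtype.val
        (ZDp_inj φ (h1.symm.trans h2))))
  · rintro ⟨hne, h | h⟩
    · refine ⟨fun hc => hne (ZDPhi_injective φ hc), ZDq φ t.1, ?_, ?_⟩
      · exact Sym2.mem_iff.mpr (Or.inl rfl)
      · rw [h]
        exact Sym2.mem_iff.mpr (Or.inl rfl)
    · refine ⟨fun hc => hne (ZDPhi_injective φ hc), ZDp φ t.2, ?_, ?_⟩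
      · exact Sym2.mem_iff.mpr (Or.inr rfl)
      · rw [h]
        exact Sym2.mem_iff.mpr (Or.inr rfl)

end ZD

theorem wiener_lineGraph_zdGraph_mul_primes
    (p q : ℕ) (hp : p.Prime) (hq : q.Prime) (h2p : 2 < p) (hpq : p < q) :
    wienerIndex (zdGraph (p * q)).lineGraph =
      (p - 1) * (q - 1) * (2 * p * q - 3 * p - 3 * q + 4) / 2 := by
  classical
  haveI := Fact.mk hp
  haveI := Fact.mk hq
  haveI : NeZero p := ⟨hp.ne_zero⟩
  haveI : NeZero q := ⟨hq.ne_zero⟩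
  haveI : NeZero (p * q) := ⟨Nat.mul_ne_zero hp.ne_zero hq.ne_zero⟩
  have hco : Nat.Coprime p q := (Nat.coprime_primes hp hq).mpr (Nat.ne_of_lt hpq)
  set φ : ZMod (p*q) ≃+* ZMod p × ZMod q := ZMod.chineseRemainder hco with hφ
  haveI : Fintype ((zdGraph (p*q)).edgeSet) := Fintype.ofFinite _
  -- the equivalence of index pairs and edges
  have hbij : Function.Bijective (ZDPhi φ) := ⟨ZDPhi_injective φ, ZDPhi_surjective φ⟩
  let E : ZDIdx p q ≃ (zdGraph (p*q)).edgeSet := Equiv.ofBijective _ hbij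
  -- cardinalities of the index sets
  have cardp : Nat.card {u : ZMod p // u ≠ 0} = p - 1 := by
    rw [Nat.card_eq_fintype_card]
    have h1 : Fintype.card {u : ZMod p // ¬ u = 0}
        = Fintype.card (ZMod p) - Fintype.card {u : ZMod p // u = 0} :=
      Fintype.card_subtype_compl _
    rw [Fintype.card_subtype_eq, ZMod.card] at h1
    exact h1
  have cardq : Nat.card {v : ZMod q // v ≠ 0} = q - 1 := by
    rw [Nat.card_eq_fintype_card]
    have h1 : Fintype.card {v : ZMod q // ¬ v = 0}
        = Fintype.card (ZMod q) - Fintype.card {v : ZMod q // v = 0} :=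
      Fintype.card_subtype_compl _
    rw [Fintype.card_subtype_eq, ZMod.card] at h1
    exact h1
  -- number of vertices of the line graph
  have hN : Nat.card ((zdGraph (p*q)).edgeSet) = (p - 1) * (q - 1) := by
    rw [Nat.card_congr E.symm, Nat.card_prod, cardp, cardq]
  -- number of ordered adjacent pairs in the line graph
  have hA : Nat.card {z : ((zdGraph (p*q)).edgeSet) × ((zdGraph (p*q)).edgeSet) //
      (zdGraph (p*q)).lineGraph.Adj z.1 z.2}
      = ((p - 1) * (q - 1)) * ((p - 1) + (q - 1) - 2) := by
    have e2 : {w : ZDIdx p q × ZDIdx p q // ¬ w.1 = w.2 ∧ (w.1.1 = w.2.1 ∨ w.1.2 = w.2.2)}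
        ≃ {z : ((zdGraph (p*q)).edgeSet) × ((zdGraph (p*q)).edgeSet) //
            (zdGraph (p*q)).lineGraph.Adj z.1 z.2} :=
      Equiv.subtypeEquiv (Equiv.prodCongr E E) (fun w => (ZDPhi_lineAdj_iff φ w.1 w.2).symm)
    rw [← Nat.card_congr e2, Nat.card_eq_fintype_card, Fintype.card_subtype, rook_pairs_card]
    have hcp : Fintype.card {u : ZMod p // u ≠ 0} = p - 1 := by
      rw [← Nat.card_eq_fintype_card]; exact cardp
    have hcq : Fintype.card {v : ZMod q // v ≠ 0} = q - 1 := by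
      rw [← Nat.card_eq_fintype_card]; exact cardq
    rw [hcp, hcq]
  -- common-neighbor property (diameter ≤ 2)
  have hcn : ∀ e f : ((zdGraph (p*q)).edgeSet), e ≠ f →
      ¬ (zdGraph (p*q)).lineGraph.Adj e f →
      ∃ g, (zdGraph (p*q)).lineGraph.Adj e g ∧ (zdGraph (p*q)).lineGraph.Adj g f := by
    intro e f hne hnadj
    obtain ⟨t, rfl⟩ := ZDPhi_surjective φ e
    obtain ⟨t', rfl⟩ := ZDPhi_surjective φ f
    have hne' : ¬ t = t' := fun h => hne (by rw [h])
    rw [ZDPhi_lineAdj_iff φ] at hnadj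
    push_neg at hnadj
    obtain ⟨h1, h2⟩ := hnadj hne'
    refine ⟨ZDPhi φ (t.1, t'.2), ?_, ?_⟩
    · rw [ZDPhi_lineAdj_iff φ]
      exact ⟨fun h => h2 (by rw [h]), Or.inl rfl⟩
    · rw [ZDPhi_lineAdj_iff φ]
      exact ⟨fun h => h1 (by rw [← h]), Or.inr rfl⟩
  -- put everything together
  unfold wienerIndex
  rw [sum_dist_eq_of_diam_le_two _ hcn, hN, hA]
  -- now pure arithmetic
  obtain ⟨m, rfl⟩ : ∃ m, p = m + 1 := ⟨p - 1, by omega⟩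
  obtain ⟨n, rfl⟩ : ∃ n, q = n + 1 := ⟨q - 1, by omega⟩
  have hm : 2 ≤ m := by omega
  have hn : 2 ≤ n := by omega
  simp only [Nat.add_sub_cancel]
  have hmn1 : m ≤ m * n := Nat.le_mul_of_pos_right m (by omega)
  have hmn2 : n ≤ m * n := Nat.le_mul_of_pos_left n (by omega)
  have e1 : 2 * (m + 1) * (n + 1) - 3 * (m + 1) - 3 * (n + 1) + 4 = 2 * (m * n) - m - n := by
    have h1 : 2 * (m + 1) * (n + 1) = 2 * (m * n) + 2 * m + 2 * n + 2 := by ring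
    have h4 : 2 * m ≤ m * n := by
      calc 2 * m = m * 2 := by ring
        _ ≤ m * n := Nat.mul_le_mul (le_refl m) hn
    have h5 : 2 * n ≤ m * n := Nat.mul_le_mul hm (le_refl n)
    omega
  rw [e1]
  congr 1
  -- 2 * (mn * mn - mn) - mn * (m + n - 2) = mn * (2 * mn - m - n)
  have hc1 : m * n ≤ m * n * (m * n) := Nat.le_mul_of_pos_right _ (by omega)
  have hc3 : 2 ≤ m + n := by omega
  have hc4 : m ≤ 2 * (m * n) := by omega
  have hc5 : n ≤ 2 * (m * n) - m := by omega
  have hc2 : m * n * (m + n - 2) ≤ 2 * (m * n * (m * n) - m * n) := by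
    have h6 : m + n - 2 ≤ 2 * (m * n - 1) := by omega
    calc m * n * (m + n - 2) ≤ m * n * (2 * (m * n - 1)) := Nat.mul_le_mul_left _ h6
      _ = 2 * (m * n * (m * n - 1)) := by ring
      _ = 2 * (m * n * (m * n) - m * n) := by rw [Nat.mul_sub, mul_one]
  zify [hc1, hc2, hc3, hc4, hc5, hmn1]
  ring
end

section
/- For distinct primes p < q and also for n = p^2 with p prime (p ≥ 5), the line graph of the zero-divisor graph of Z_n is an integral graph: every eigenvalue of its adjacency matrix is an integer. -/
set_option linter.unusedSectionVars false
set_option maxHeartbeats 2000000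

open Polynomial SimpleGraph

section All
open Finset Matrix
section AnnRoots
variable {n : Type*} [Fintype n] [DecidableEq n]

lemma eval_charpoly' (M : Matrix n n ℝ) (x : ℝ) :
    M.charpoly.eval x = (x • (1 : Matrix n n ℝ) - M).det := by
  rw [Matrix.charpoly, ← Polynomial.coe_evalRingHom, RingHom.map_det]
  congr 1
  ext i j
  by_cases h : i = j
  · subst h
    simp [Matrix.charmatrix_apply_eq, Matrix.one_apply_eq]
  · simp [Matrix.charmatrix_apply_ne _ _ _ h, Matrix.one_apply_ne h]

lemma exists_eigen (M : Matrix n n ℝ) {x : ℝ} (hx : M.charpoly.IsRoot x) :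
    ∃ v : n → ℝ, v ≠ 0 ∧ M.mulVec v = x • v := by
  have hdet : (x • (1 : Matrix n n ℝ) - M).det = 0 := by
    rw [← eval_charpoly']; exact hx
  obtain ⟨v, hv0, hv⟩ := Matrix.exists_mulVec_eq_zero_iff.mpr hdet
  refine ⟨v, hv0, ?_⟩
  rw [Matrix.sub_mulVec, Matrix.smul_mulVec, Matrix.one_mulVec, sub_eq_zero] at hv
  exact hv.symm

lemma aeval_mulVec (M : Matrix n n ℝ) {v : n → ℝ} {x : ℝ} (hv : M.mulVec v = x • v) :
    ∀ Q : ℝ[X], (aeval M Q).mulVec v = Q.eval x • v := by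
  have hpow : ∀ k : ℕ, (M ^ k).mulVec v = x ^ k • v := by
    intro k
    induction k with
    | zero => simp [Matrix.one_mulVec]
    | succ k ih =>
      rw [pow_succ, ← Matrix.mulVec_mulVec, hv, Matrix.mulVec_smul, ih, pow_succ,
        smul_smul]
      ring_nf
  intro Q
  induction Q using Polynomial.induction_on' with
  | add p q hp hq => simp [Matrix.add_mulVec, hp, hq, add_smul]
  | monomial k c =>
    rw [aeval_monomial, Algebra.algebraMap_eq_smul_one, smul_mul_assoc, one_mul,
      Matrix.smul_mulVec, hpow, eval_monomial, smul_smul]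

lemma eval_eq_zero_of_aeval_eq_zero (M : Matrix n n ℝ) (P : ℝ[X])
    (hP : aeval M P = 0) {x : ℝ} (hx : x ∈ M.charpoly.roots) : P.eval x = 0 := by
  obtain ⟨v, hv0, hv⟩ := exists_eigen M (isRoot_of_mem_roots hx)
  have key2 := aeval_mulVec M hv P
  rw [hP, Matrix.zero_mulVec] at key2
  rcases smul_eq_zero.mp key2.symm with h | h
  · exact h
  · exact absurd h hv0
end AnnRoots
section Inc
variable {V : Type*} [Fintype V] [DecidableEq V] (G : SimpleGraph V) [Fintype G.edgeSet]

/-- incidence matrix, edges × vertices -/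
def incN : Matrix G.edgeSet V ℝ :=
  Matrix.of fun e v => if v ∈ (e : Sym2 V) then 1 else 0

lemma incN_apply (e : G.edgeSet) (v : V) :
    incN G e v = if v ∈ (e : Sym2 V) then 1 else 0 := rfl

lemma sum_mem_sym2 (e : G.edgeSet) :
    ∑ v : V, (if v ∈ (e : Sym2 V) then (1 : ℝ) else 0) = 2 := by
  obtain ⟨e, he⟩ := e
  induction e with
  | _ x y =>
    have hxy : x ≠ y := G.ne_of_adj (G.mem_edgeSet.mp he)
    have : ∀ v : V, (if v ∈ (s(x, y) : Sym2 V) then (1 : ℝ) else 0)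
        = if v ∈ ({x, y} : Finset V) then (1 : ℝ) else 0 := by
      intro v; simp [Sym2.mem_iff]
    simp only [this]
    rw [Finset.sum_ite_mem, Finset.univ_inter, Finset.sum_const,
      Finset.card_insert_of_notMem (by simpa using hxy), Finset.card_singleton]
    norm_num

lemma incN_mul_transpose [DecidableEq G.edgeSet] [DecidableRel (G.lineGraph).Adj] :
    incN G * (incN G)ᵀ = (G.lineGraph).adjMatrix ℝ + 2 • (1 : Matrix G.edgeSet G.edgeSet ℝ) := by
  ext e f
  rw [Matrix.mul_apply]
  simp only [incN_apply, Matrix.transpose_apply, Matrix.add_apply, adjMatrix_apply,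
    Matrix.smul_apply, Matrix.one_apply]
  by_cases hef : e = f
  · subst hef
    have h2 := sum_mem_sym2 G e
    simp only [ite_mul, one_mul, zero_mul, mul_ite, mul_one, mul_zero]
    rw [show (∑ v, if v ∈ (e : Sym2 V) then if v ∈ (e : Sym2 V) then (1:ℝ) else 0 else 0)
        = ∑ v, (if v ∈ (e : Sym2 V) then (1:ℝ) else 0) from Finset.sum_congr rfl
        (fun v _ => by by_cases h : v ∈ (e : Sym2 V) <;> simp [h]), h2]
    simp [SimpleGraph.irrefl]
  · by_cases hadj : (G.lineGraph).Adj e f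
    · obtain ⟨-, w, hw1, hw2⟩ := lineGraph_adj_iff_exists.mp hadj
      rw [Finset.sum_eq_single_of_mem w (Finset.mem_univ w)]
      · simp [hw1, hw2, hadj, hef]
      · intro b _ hbw
        by_cases hb1 : b ∈ (e : Sym2 V)
        · by_cases hb2 : b ∈ (f : Sym2 V)
          · exact absurd (Subtype.ext (Sym2.eq_of_ne_mem hbw hb1 hw1 hb2 hw2)) hef
          · simp [hb2]
        · simp [hb1]
    · rw [Finset.sum_eq_zero, eq_comm]
      · simp [hadj, hef]
      · intro v _
        by_cases hv1 : v ∈ (e : Sym2 V)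
        · by_cases hv2 : v ∈ (f : Sym2 V)
          · exact absurd (lineGraph_adj_iff_exists.mpr ⟨hef, v, hv1, hv2⟩) hadj
          · simp [hv2]
        · simp [hv1]

/-- the equiv between edges through u and the incidence set -/
def incEquiv (u : V) : {e : G.edgeSet // u ∈ (e : Sym2 V)} ≃ G.incidenceSet u where
  toFun x := ⟨x.1.1, x.1.2, x.2⟩
  invFun x := ⟨⟨x.1, x.2.1⟩, x.2.2⟩
  left_inv _ := rfl
  right_inv _ := rfl

lemma transpose_incN_mul [DecidableRel G.Adj] (u v : V) :
    ((incN G)ᵀ * incN G) u v =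
      if u = v then (G.degree u : ℝ) else if G.Adj u v then 1 else 0 := by
  classical
  rw [Matrix.mul_apply]
  simp only [incN_apply, Matrix.transpose_apply, ite_mul, one_mul, zero_mul]
  by_cases huv : u = v
  · subst huv
    rw [show (∑ e : G.edgeSet, if u ∈ (e : Sym2 V) then if u ∈ (e : Sym2 V) then (1:ℝ) else 0 else 0)
        = ∑ e : G.edgeSet, (if u ∈ (e : Sym2 V) then (1:ℝ) else 0) from Finset.sum_congr rfl
        (fun e _ => by by_cases h : u ∈ (e : Sym2 V) <;> simp [h])]
    rw [Finset.sum_boole, if_pos rfl]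
    congr 1
    rw [← Fintype.card_subtype, ← G.card_incidenceSet_eq_degree u]
    exact Fintype.card_congr (incEquiv G u)
  · by_cases hadj : G.Adj u v
    · have hmem : s(u, v) ∈ G.edgeSet := G.mem_edgeSet.mpr hadj
      rw [Finset.sum_eq_single_of_mem (⟨s(u,v), hmem⟩ : G.edgeSet) (Finset.mem_univ _)]
      · simp [huv, hadj, Sym2.mem_iff]
      · intro e _ he
        by_cases h1 : u ∈ (e : Sym2 V)
        · by_cases h2 : v ∈ (e : Sym2 V)
          · exact absurd (Subtype.ext ((Sym2.mem_and_mem_iff huv).mp ⟨h1, h2⟩)) he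
          · simp [h2]
        · simp [h1]
    · rw [Finset.sum_eq_zero, eq_comm]
      · simp [huv, hadj]
      · intro e _
        by_cases h1 : u ∈ (e : Sym2 V)
        · by_cases h2 : v ∈ (e : Sym2 V)
          · exact absurd (G.mem_edgeSet.mp (((Sym2.mem_and_mem_iff huv).mp ⟨h1, h2⟩) ▸ e.2)) hadj
          · simp [h2]
        · simp [h1]

lemma mulVecpoly [DecidableEq G.edgeSet] (R : ℝ[X]) :
    (incN G * (incN G)ᵀ) * aeval (incN G * (incN G)ᵀ) R
      = incN G * aeval ((incN G)ᵀ * incN G) R * (incN G)ᵀ := by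
  classical
  set N := incN G
  have hpow : ∀ k : ℕ, (N * Nᵀ) ^ (k + 1) = N * (Nᵀ * N) ^ k * Nᵀ := by
    intro k
    induction k with
    | zero => simp
    | succ k ih =>
      rw [pow_succ, ih, pow_succ]
      simp [Matrix.mul_assoc]
  induction R using Polynomial.induction_on' with
  | add p q hp hq => simp only [map_add, Matrix.mul_add, Matrix.add_mul, hp, hq]
  | monomial k c =>
    simp only [aeval_monomial, Algebra.algebraMap_eq_smul_one, smul_mul_assoc, one_mul,
      mul_smul_comm, hpow k]
    rw [← pow_succ']
    rw [hpow k]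
    simp [Matrix.mul_smul, Matrix.smul_mul]


lemma lineGraph_root [DecidableEq G.edgeSet] [DecidableRel (G.lineGraph).Adj]
    (R : ℝ[X]) (hR : aeval ((incN G)ᵀ * incN G) R = 0) {x : ℝ}
    (hx : x ∈ ((G.lineGraph).adjMatrix ℝ).charpoly.roots) :
    x = -2 ∨ R.eval (x + 2) = 0 := by
  obtain ⟨v, hv0, hv⟩ := exists_eigen _ (isRoot_of_mem_roots hx)
  set A := (G.lineGraph).adjMatrix ℝ
  set M := incN G * (incN G)ᵀ with hMdef
  have hM : M = A + 2 • 1 := incN_mul_transpose G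
  have hMv : M.mulVec v = (x + 2) • v := by
    rw [hM, Matrix.add_mulVec, hv, add_smul]
    congr 1
    rw [Matrix.smul_mulVec, Matrix.one_mulVec, two_smul, two_smul]
  have h0 : M * aeval M R = 0 := by
    rw [hMdef, mulVecpoly, hR]
    simp
  have h2 : ((x + 2) * R.eval (x + 2)) • v = 0 := by
    rw [mul_smul, ← aeval_mulVec M hMv R, ← Matrix.mulVec_smul, ← hMv,
      Matrix.mulVec_mulVec,
      show aeval M R * M = M * aeval M R by
        have h := ((Polynomial.commute_X R).map (aeval (R := ℝ) M)).symm.eq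
        simpa using h,
      h0, Matrix.zero_mulVec]
  rcases smul_eq_zero.mp h2 with h | h
  · rcases mul_eq_zero.mp h with h' | h'
    · left; linarith
    · right; exact h'
  · exact absurd h hv0

end Inc
section RankOne
variable {V : Type*} [Fintype V] [DecidableEq V]

lemma vmv_mul_vmv (u v w z : V → ℝ) :
    vecMulVec u v * vecMulVec w z = (v ⬝ᵥ w) • vecMulVec u z := by
  ext i j
  rw [Matrix.mul_apply, Matrix.smul_apply, Matrix.vecMulVec_apply, smul_eq_mul, dotProduct,
    Finset.sum_mul]
  refine Finset.sum_congr rfl fun k _ => ?_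
  rw [Matrix.vecMulVec_apply, Matrix.vecMulVec_apply]
  ring

lemma diag_mul_vmv (d u v : V → ℝ) :
    Matrix.diagonal d * vecMulVec u v = vecMulVec (fun i => d i * u i) v := by
  ext i j
  rw [Matrix.diagonal_mul, Matrix.vecMulVec_apply, Matrix.vecMulVec_apply, mul_assoc]

lemma vmv_mul_diag (u v d : V → ℝ) :
    vecMulVec u v * Matrix.diagonal d = vecMulVec u (fun j => v j * d j) := by
  ext i j
  rw [Matrix.mul_diagonal, Matrix.vecMulVec_apply, Matrix.vecMulVec_apply, mul_assoc]

lemma vmv_zero_left (v : V → ℝ) : vecMulVec (fun _ : V => (0:ℝ)) v = 0 := by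
  ext i j; simp [Matrix.vecMulVec_apply]

lemma vmv_zero_right (v : V → ℝ) : vecMulVec v (fun _ : V => (0:ℝ)) = 0 := by
  ext i j; simp [Matrix.vecMulVec_apply]

lemma diag_zero' : Matrix.diagonal (fun _ : V => (0:ℝ)) = 0 := by
  ext i j; by_cases h : i = j <;> simp [h]

variable (s : V → Prop) [DecidablePred s]

/-- indicator of s -/
def xv : V → ℝ := fun v => if s v then 1 else 0
/-- indicator of complement of s -/
def yv : V → ℝ := fun v => if s v then 0 else 1

lemma bip_quartic (a b : ℝ) (ha : a = ∑ v, xv s v) (hb : b = ∑ v, yv s v)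
    (Q : Matrix V V ℝ)
    (hQ : Q = b • Matrix.diagonal (xv s) + a • Matrix.diagonal (yv s)
      + vecMulVec (xv s) (yv s) + vecMulVec (yv s) (xv s)) :
    aeval Q (X * ((X - C (a + b)) * ((X - C b) * (X - C a)))) = 0 := by
  set x := xv s with hx
  set y := yv s with hy
  set Dx := Matrix.diagonal x with hDx
  set Dy := Matrix.diagonal y with hDy
  set Xx := vecMulVec x x with hXx
  set Xy := vecMulVec x y with hXy
  set Yx := vecMulVec y x with hYx
  set Yy := vecMulVec y y with hYy
  have hxx : (fun i => x i * x i) = x := funext fun v => by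
    by_cases h : s v <;> simp [hx, xv, h]
  have hxy : (fun i => x i * y i) = (fun _ => (0:ℝ)) := funext fun v => by
    by_cases h : s v <;> simp [hx, hy, xv, yv, h]
  have hyx : (fun i => y i * x i) = (fun _ => (0:ℝ)) := funext fun v => by
    by_cases h : s v <;> simp [hx, hy, xv, yv, h]
  have hyy : (fun i => y i * y i) = y := funext fun v => by
    by_cases h : s v <;> simp [hy, yv, h]
  have dxx : x ⬝ᵥ x = a := by
    rw [dotProduct, ha]; exact Finset.sum_congr rfl fun v _ => by
      by_cases h : s v <;> simp [hx, xv, h]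
  have dyy : y ⬝ᵥ y = b := by
    rw [dotProduct, hb]; exact Finset.sum_congr rfl fun v _ => by
      by_cases h : s v <;> simp [hy, yv, h]
  have dxy : x ⬝ᵥ y = 0 := by
    rw [dotProduct]; exact Finset.sum_eq_zero fun v _ => by
      by_cases h : s v <;> simp [hx, hy, xv, yv, h]
  have dyx : y ⬝ᵥ x = 0 := by
    rw [dotProduct]; exact Finset.sum_eq_zero fun v _ => by
      by_cases h : s v <;> simp [hx, hy, xv, yv, h]
  have hone : (1 : Matrix V V ℝ) = Dx + Dy := by
    rw [hDx, hDy]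
    ext i j
    by_cases h : i = j
    · subst h
      by_cases hs : s i <;>
        simp [Matrix.one_apply, Matrix.add_apply, Matrix.diagonal_apply_eq, hx, hy, xv, yv, hs]
    · simp [Matrix.one_apply_ne h, Matrix.add_apply, Matrix.diagonal_apply_ne _ h]
  -- product table
  have pDyDx : Dy * Dx = 0 := by
    rw [hDy, hDx, Matrix.diagonal_mul_diagonal, hyx, diag_zero']
  have pDyXy : Dy * Xy = 0 := by rw [hDy, hXy, diag_mul_vmv, hyx, vmv_zero_left]
  have pDyYx : Dy * Yx = Yx := by rw [hDy, hYx, diag_mul_vmv, hyy]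
  have pXyDx : Xy * Dx = 0 := by rw [hXy, hDx, vmv_mul_diag, hyx, vmv_zero_right]
  have pYxDx : Yx * Dx = Yx := by rw [hYx, hDx, vmv_mul_diag, hxx]
  have pXyXy : Xy * Xy = 0 := by rw [hXy, vmv_mul_vmv, dyx, zero_smul]
  have pXyYx : Xy * Yx = b • Xx := by rw [hXy, hYx, hXx, vmv_mul_vmv, dyy]
  have pYxXy : Yx * Xy = a • Yy := by rw [hXy, hYx, hYy, vmv_mul_vmv, dxx]
  have pYxYx : Yx * Yx = 0 := by rw [hYx, vmv_mul_vmv, dxy, zero_smul]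
  have pDxXx : Dx * Xx = Xx := by rw [hDx, hXx, diag_mul_vmv, hxx]
  have pDyXx : Dy * Xx = 0 := by rw [hDy, hXx, diag_mul_vmv, hyx, vmv_zero_left]
  have pXyXx : Xy * Xx = 0 := by rw [hXy, hXx, vmv_mul_vmv, dyx, zero_smul]
  have pYxXx : Yx * Xx = a • Yx := by rw [hYx, hXx, vmv_mul_vmv, dxx]
  have pDxYx : Dx * Yx = 0 := by rw [hDx, hYx, diag_mul_vmv, hxy, vmv_zero_left]
  have pDxXy : Dx * Xy = Xy := by rw [hDx, hXy, diag_mul_vmv, hxx]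
  have pDxYy : Dx * Yy = 0 := by rw [hDx, hYy, diag_mul_vmv, hxy, vmv_zero_left]
  have pDyYy : Dy * Yy = Yy := by rw [hDy, hYy, diag_mul_vmv, hyy]
  have pXyYy : Xy * Yy = b • Xy := by rw [hXy, hYy, vmv_mul_vmv, dyy]
  have pYxYy : Yx * Yy = 0 := by rw [hYx, hYy, vmv_mul_vmv, dxy, zero_smul]
  -- aeval reduction
  have e1 : ∀ c : ℝ, aeval Q (X - C c) = Q - c • 1 := fun c => by
    simp [Algebra.algebraMap_eq_smul_one]
  rw [_root_.map_mul, _root_.map_mul, _root_.map_mul, aeval_X, e1, e1, e1]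
  -- staged computation
  have f1 : Q - b • 1 = (a - b) • Dy + Xy + Yx := by rw [hQ, hone]; module
  have f2 : Q - a • 1 = (b - a) • Dx + Xy + Yx := by rw [hQ, hone]; module
  have h2 : (Q - b • 1) * (Q - a • 1) = b • Xx + a • Yy := by
    rw [f1, f2]
    simp only [Matrix.add_mul, Matrix.mul_add, Matrix.smul_mul, Matrix.mul_smul,
      pDyDx, pDyXy, pDyYx, pXyDx, pYxDx, pXyXy, pXyYx, pYxXy, pYxYx,
      smul_zero, add_zero, zero_add, smul_smul, mul_zero, zero_mul, smul_add]
    module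
  have hQXx : Q * Xx = b • Xx + a • Yx := by
    rw [hQ]
    simp only [Matrix.add_mul, Matrix.smul_mul, pDxXx, pDyXx, pXyXx, pYxXx,
      smul_zero, add_zero, zero_add]
  have hQYx : Q * Yx = b • Xx + a • Yx := by
    rw [hQ]
    simp only [Matrix.add_mul, Matrix.smul_mul, pDxYx, pDyYx, pXyYx, pYxYx,
      smul_zero, add_zero, zero_add]
    all_goals module
  have hQXy : Q * Xy = b • Xy + a • Yy := by
    rw [hQ]
    simp only [Matrix.add_mul, Matrix.smul_mul, pDxXy, pDyXy, pYxXy, pXyXy,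
      smul_zero, add_zero, zero_add]
    all_goals module
  have hQYy : Q * Yy = b • Xy + a • Yy := by
    rw [hQ]
    simp only [Matrix.add_mul, Matrix.smul_mul, pDxYy, pDyYy, pXyYy, pYxYy,
      smul_zero, add_zero, zero_add]
    all_goals module
  have h4 : (Q - (a + b) • 1) * (b • Xx + a • Yy)
      = (a * b) • (Yx + Xy - Xx - Yy) := by
    rw [Matrix.sub_mul, Matrix.mul_add, Matrix.mul_smul, Matrix.mul_smul, hQXx, hQYy,
      Matrix.smul_mul, Matrix.one_mul]
    module
  calc Q * ((Q - (a + b) • 1) * ((Q - b • 1) * (Q - a • 1)))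
      = Q * ((a * b) • (Yx + Xy - Xx - Yy)) := by rw [h2, h4]
    _ = (a * b) • (Q * Yx + Q * Xy - Q * Xx - Q * Yy) := by
        rw [Matrix.mul_smul]; congr 1
        rw [Matrix.mul_sub, Matrix.mul_sub, Matrix.mul_add]
    _ = 0 := by rw [hQXx, hQYx, hQXy, hQYy]; module

lemma complete_quadratic (m : ℝ) (hm : m = ∑ _v : V, (1 : ℝ)) (Q : Matrix V V ℝ)
    (hQ : Q = vecMulVec (fun _ => (1:ℝ)) (fun _ => (1:ℝ)) + (m - 2) • 1) :
    aeval Q ((X - C (m - 2)) * (X - C (2 * m - 2))) = 0 := by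
  have e1 : ∀ c : ℝ, aeval Q (X - C c) = Q - c • 1 := fun c => by
    simp [Algebra.algebraMap_eq_smul_one]
  rw [_root_.map_mul, e1, e1]
  set J := vecMulVec (fun _ : V => (1:ℝ)) (fun _ => (1:ℝ)) with hJ
  have hJJ : J * J = m • J := by
    rw [hJ, vmv_mul_vmv]
    congr 1
    rw [hm, dotProduct]
    simp
  have f1 : Q - (m - 2) • 1 = J := by rw [hQ]; module
  have f2 : Q - (2 * m - 2) • 1 = J - m • 1 := by rw [hQ]; module
  rw [f1, f2, Matrix.mul_sub, hJJ, Matrix.mul_smul, Matrix.mul_one, sub_self]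

end RankOne

section Assemble
variable {V : Type*} [Fintype V] [DecidableEq V] (G : SimpleGraph V) [Fintype G.edgeSet]
  [DecidableEq G.edgeSet] [DecidableRel G.Adj] [DecidableRel (G.lineGraph).Adj]

lemma degree_cast_eq_sum (u : V) :
    (G.degree u : ℝ) = ∑ v, (if G.Adj u v then (1:ℝ) else 0) := by
  rw [SimpleGraph.degree, neighborFinset_eq_filter, Finset.sum_boole]

lemma bip_Q (s : V → Prop) [DecidablePred s]
    (hadj : ∀ u v, G.Adj u v ↔ (s u ∧ ¬ s v) ∨ (s v ∧ ¬ s u)) :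
    (incN G)ᵀ * incN G = (∑ v, yv s v) • Matrix.diagonal (xv s)
      + (∑ v, xv s v) • Matrix.diagonal (yv s)
      + vecMulVec (xv s) (yv s) + vecMulVec (yv s) (xv s) := by
  ext u v
  rw [transpose_incN_mul]
  simp only [Matrix.add_apply, Matrix.smul_apply, Matrix.vecMulVec_apply, smul_eq_mul]
  by_cases huv : u = v
  · subst huv
    rw [if_pos rfl, Matrix.diagonal_apply_eq, Matrix.diagonal_apply_eq, degree_cast_eq_sum]
    by_cases hs : s u
    · have : ∀ v, (if G.Adj u v then (1:ℝ) else 0) = yv s v := fun v => by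
        by_cases h : s v <;> simp [hadj, yv, h, hs]
      rw [Finset.sum_congr rfl fun v _ => this v]
      simp [xv, yv, hs]
      rfl
    · have : ∀ v, (if G.Adj u v then (1:ℝ) else 0) = xv s v := fun v => by
        by_cases h : s v <;> simp [hadj, xv, h, hs]
      rw [Finset.sum_congr rfl fun v _ => this v]
      simp [xv, yv, hs]
      unfold xv; rw [Finset.sum_boole]
  · rw [if_neg huv, Matrix.diagonal_apply_ne _ huv, Matrix.diagonal_apply_ne _ huv]
    by_cases h1 : s u <;> by_cases h2 : s v <;>
      simp [hadj, xv, yv, h1, h2, huv]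

lemma complete_Q (h : ∀ u v : V, u ≠ v → G.Adj u v) :
    (incN G)ᵀ * incN G = vecMulVec (fun _ : V => (1:ℝ)) (fun _ => (1:ℝ))
      + ((∑ _v : V, (1:ℝ)) - 2) • 1 := by
  ext u v
  rw [transpose_incN_mul]
  simp only [Matrix.add_apply, Matrix.smul_apply, Matrix.vecMulVec_apply, smul_eq_mul,
    Matrix.one_apply]
  by_cases huv : u = v
  · subst huv
    rw [if_pos rfl, if_pos rfl, degree_cast_eq_sum]
    have : ∀ v, (if G.Adj u v then (1:ℝ) else 0) = if v = u then 0 else 1 := fun v => by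
      by_cases hv : v = u
      · subst hv; simp
      · simp [hv, h u v (Ne.symm hv)]
    rw [Finset.sum_congr rfl fun v _ => this v]
    have : ∑ v : V, (if v = u then (0:ℝ) else 1) = (∑ _v : V, (1:ℝ)) - 1 := by
      have h2 : ∀ v : V, (if v = u then (0:ℝ) else 1) = 1 - (if v = u then 1 else 0) := fun v => by
        by_cases hv : v = u <;> simp [hv]
      rw [Finset.sum_congr rfl fun v _ => h2 v, Finset.sum_sub_distrib,
        Finset.sum_ite_eq' Finset.univ u (fun _ => (1:ℝ)), if_pos (Finset.mem_univ u)]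
    rw [this]
    ring
  · rw [if_neg huv, if_neg huv]
    simp [h u v huv]

lemma roots_int_bip (s : V → Prop) [DecidablePred s]
    (hadj : ∀ u v, G.Adj u v ↔ (s u ∧ ¬ s v) ∨ (s v ∧ ¬ s u)) :
    ∀ x ∈ ((G.lineGraph).adjMatrix ℝ).charpoly.roots, ∃ k : ℤ, x = (k : ℝ) := by
  intro x hx
  set a : ℝ := ∑ v, xv s v with ha
  set b : ℝ := ∑ v, yv s v with hb
  have haZ : ∃ ka : ℤ, a = (ka : ℝ) := by
    refine ⟨(Finset.univ.filter s).card, ?_⟩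
    rw [ha]
    push_cast
    rw [← Finset.sum_boole]
    rfl
  have hbZ : ∃ kb : ℤ, b = (kb : ℝ) := by
    refine ⟨(Finset.univ.filter (fun v => ¬ s v)).card, ?_⟩
    rw [hb]
    push_cast
    rw [← Finset.sum_boole]
    exact Finset.sum_congr rfl fun v _ => by by_cases h : s v <;> simp [yv, h]
  obtain ⟨ka, hka⟩ := haZ
  obtain ⟨kb, hkb⟩ := hbZ
  have hann := bip_quartic s a b ha hb ((incN G)ᵀ * incN G) (bip_Q G s hadj)
  rcases lineGraph_root G _ hann hx with h | h
  · exact ⟨-2, by rw [h]; norm_num⟩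
  · simp only [eval_mul, eval_sub, eval_X, eval_C, mul_eq_zero, sub_eq_zero] at h
    rcases h with h | h | h | h
    · exact ⟨-2, by push_cast; linarith⟩
    · exact ⟨ka + kb - 2, by push_cast; rw [← hka, ← hkb]; linarith⟩
    · exact ⟨kb - 2, by push_cast; rw [← hkb]; linarith⟩
    · exact ⟨ka - 2, by push_cast; rw [← hka]; linarith⟩

lemma roots_int_complete (h : ∀ u v : V, u ≠ v → G.Adj u v) :
    ∀ x ∈ ((G.lineGraph).adjMatrix ℝ).charpoly.roots, ∃ k : ℤ, x = (k : ℝ) := by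
  intro x hx
  set m : ℝ := ∑ _v : V, (1:ℝ) with hm
  have hmZ : m = ((Fintype.card V : ℤ) : ℝ) := by
    rw [hm]; push_cast; simp
  have hann := complete_quadratic m hm ((incN G)ᵀ * incN G) (complete_Q G h)
  rcases lineGraph_root G _ hann hx with h' | h'
  · exact ⟨-2, by rw [h']; norm_num⟩
  · simp only [eval_mul, eval_sub, eval_X, eval_C, mul_eq_zero, sub_eq_zero] at h'
    rcases h' with h' | h'
    · exact ⟨(Fintype.card V : ℤ) - 4, by push_cast at hmZ ⊢; linarith⟩
    · exact ⟨2 * (Fintype.card V : ℤ) - 4, by push_cast at hmZ ⊢; linarith⟩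

end Assemble
section ZD

lemma zmod_mul_eq_zero_iff (n : ℕ) [NeZero n] (u v : ZMod n) :
    u * v = 0 ↔ n ∣ u.val * v.val := by
  rw [show u * v = ((u.val * v.val : ℕ) : ZMod n) by
    rw [Nat.cast_mul, ZMod.natCast_val, ZMod.natCast_val, ZMod.cast_id, ZMod.cast_id],
    ZMod.natCast_eq_zero_iff]

lemma zd_not_coprime (n : ℕ) [NeZero n]
    (v : {x : ZMod n // x ≠ 0 ∧ ∃ y : ZMod n, y ≠ 0 ∧ x * y = 0}) :
    ¬ Nat.Coprime ((v : ZMod n).val) n := by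
  intro hc
  have hu : IsUnit (((v : ZMod n).val : ℕ) : ZMod n) := (ZMod.isUnit_iff_coprime _ n).mpr hc
  rw [ZMod.natCast_val, ZMod.cast_id] at hu
  obtain ⟨y, hy, hxy⟩ := v.2.2
  exact hy ((hu.mul_right_eq_zero).mp hxy)

lemma zd_padic_dvd (p : ℕ) (hp : p.Prime) [NeZero (p ^ 2)]
    (v : {x : ZMod (p ^ 2) // x ≠ 0 ∧ ∃ y : ZMod (p ^ 2), y ≠ 0 ∧ x * y = 0}) :
    p ∣ (v : ZMod (p ^ 2)).val := by
  by_contra h1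
  exact zd_not_coprime (p ^ 2) v
    (((hp.coprime_iff_not_dvd).mpr h1).symm.pow_right 2)

lemma zd_complete (p : ℕ) (hp : p.Prime) [NeZero (p ^ 2)] :
    ∀ u v, u ≠ v → (zdGraph (p ^ 2)).Adj u v := by
  intro u v hne
  refine (⟨hne, ?_⟩ : u ≠ v ∧ (u : ZMod (p ^ 2)) * v = 0)
  rw [zmod_mul_eq_zero_iff]
  have h := mul_dvd_mul (zd_padic_dvd p hp u) (zd_padic_dvd p hp v)
  rwa [← pow_two] at h

section PQ
variable (p q : ℕ) (hp : p.Prime) (hq : q.Prime) (hpq : p < q) [NeZero (p * q)]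
include hp hq hpq

lemma zd_or (v : {x : ZMod (p * q) // x ≠ 0 ∧ ∃ y : ZMod (p * q), y ≠ 0 ∧ x * y = 0}) :
    p ∣ (v : ZMod (p * q)).val ∨ q ∣ (v : ZMod (p * q)).val := by
  by_contra hcon
  push_neg at hcon
  exact zd_not_coprime (p * q) v
    (Nat.Coprime.mul_right (((Nat.Prime.coprime_iff_not_dvd hp).mpr hcon.1).symm)
      (((Nat.Prime.coprime_iff_not_dvd hq).mpr hcon.2).symm))

lemma zd_not_both (v : {x : ZMod (p * q) // x ≠ 0 ∧ ∃ y : ZMod (p * q), y ≠ 0 ∧ x * y = 0}) :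
    ¬ (p ∣ (v : ZMod (p * q)).val ∧ q ∣ (v : ZMod (p * q)).val) := by
  rintro ⟨h1, h2⟩
  have hco : Nat.Coprime p q := (Nat.coprime_primes hp hq).mpr (Nat.ne_of_lt hpq)
  have hdvd : p * q ∣ (v : ZMod (p * q)).val := hco.mul_dvd_of_dvd_of_dvd h1 h2
  have hlt : (v : ZMod (p * q)).val < p * q := ZMod.val_lt _
  have hne : (v : ZMod (p * q)).val ≠ 0 := fun h =>
    v.2.1 ((ZMod.val_eq_zero _).mp h)
  exact absurd (Nat.le_of_dvd (Nat.pos_of_ne_zero hne) hdvd) (not_le.mpr hlt)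

lemma zd_bip :
    ∀ u v, (zdGraph (p * q)).Adj u v ↔
      ((p ∣ (u : ZMod (p * q)).val ∧ ¬ p ∣ (v : ZMod (p * q)).val) ∨
       (p ∣ (v : ZMod (p * q)).val ∧ ¬ p ∣ (u : ZMod (p * q)).val)) := by
  intro u v
  constructor
  · rintro (⟨hne, h0⟩ : u ≠ v ∧ (u : ZMod (p * q)) * v = 0)
    rw [zmod_mul_eq_zero_iff] at h0
    by_cases h1 : p ∣ (u : ZMod (p * q)).val <;> by_cases h2 : p ∣ (v : ZMod (p * q)).val
    · exfalso
      have hqd : q ∣ (u : ZMod (p * q)).val * (v : ZMod (p * q)).val :=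
        dvd_trans (dvd_mul_left q p) h0
      rcases (Nat.Prime.dvd_mul hq).mp hqd with h | h
      · exact zd_not_both p q hp hq hpq u ⟨h1, h⟩
      · exact zd_not_both p q hp hq hpq v ⟨h2, h⟩
    · exact Or.inl ⟨h1, h2⟩
    · exact Or.inr ⟨h2, h1⟩
    · exfalso
      have hpd : p ∣ (u : ZMod (p * q)).val * (v : ZMod (p * q)).val :=
        dvd_trans (dvd_mul_right p q) h0
      rcases (Nat.Prime.dvd_mul hp).mp hpd with h | h
      · exact h1 h
      · exact h2 h
  · rintro (⟨h1, h2⟩ | ⟨h1, h2⟩)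
    · have hqv : q ∣ (v : ZMod (p * q)).val := (zd_or p q hp hq hpq v).resolve_left h2
      refine (⟨fun heq => h2 (heq ▸ h1), ?_⟩ : u ≠ v ∧ (u : ZMod (p * q)) * v = 0)
      rw [zmod_mul_eq_zero_iff]
      exact mul_dvd_mul h1 hqv
    · have hqu : q ∣ (u : ZMod (p * q)).val := (zd_or p q hp hq hpq u).resolve_left h2
      refine (⟨fun heq => h2 (by rw [heq]; exact h1), ?_⟩ : u ≠ v ∧ (u : ZMod (p * q)) * v = 0)
      rw [zmod_mul_eq_zero_iff, mul_comm ((u : ZMod (p*q)).val)]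
      exact mul_dvd_mul h1 hqu
end PQ
end ZD

end All

open scoped Classical in
theorem lineGraph_zdGraph_integral :
    (∀ (p q : ℕ) [NeZero (p * q)], p.Prime → q.Prime → p < q →
      ∀ x ∈ ((zdGraph (p * q)).lineGraph.adjMatrix ℝ).charpoly.roots,
        ∃ k : ℤ, x = (k : ℝ)) ∧
    (∀ (p : ℕ) [NeZero (p ^ 2)], p.Prime → 5 ≤ p →
      ∀ x ∈ ((zdGraph (p ^ 2)).lineGraph.adjMatrix ℝ).charpoly.roots,
        ∃ k : ℤ, x = (k : ℝ)) := by
  constructor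
  · intro p q _ hp hq hpq x hx
    exact roots_int_bip (zdGraph (p * q)) (fun v => p ∣ (v : ZMod (p * q)).val)
      (zd_bip p q hp hq hpq) x hx
  · intro p _ hp _ x hx
    exact roots_int_complete (zdGraph (p ^ 2)) (zd_complete p hp) x hx
end
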